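/- arXiv:math/0403353 — 8 statements merged into one kernel-verified Lean document; each statement's English description precedes it below -/
import Mathlib

section
/- For all natural numbers n, the sum over k from 0 to n of C(n,k)^2 * H_k equals C(2n,n) * (2*H_n - H_{2n}), where H_m denotes the m-th harmonic number. -/
open Finset Polynomial

def harmonicQ (m : Nat) : ℚ := ∑ j ∈ Finset.range m, (1 : ℚ) / (j + 1)

/-- falling factorial polynomial -/
noncomputable def pf (a : ℕ → ℚ) (k : ℕ) : Polynomial ℚ :=
  ∏ i ∈ Finset.range k, (X - C (a i))

lemma eval_pf (a : ℕ → ℚ) (k : ℕ) (x : ℚ) :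
    (pf a k).eval x = ∏ i ∈ range k, (x - a i) := by
  simp [pf, eval_prod]

lemma eval_deriv_pf (a : ℕ → ℚ) (k : ℕ) (x : ℚ) (hx : ∀ i < k, x - a i ≠ 0) :
    (derivative (pf a k)).eval x
      = (∏ i ∈ range k, (x - a i)) * ∑ i ∈ range k, (x - a i)⁻¹ := by
  induction k with
  | zero => simp [pf]
  | succ k ih =>
    have hk : ∀ i < k, x - a i ≠ 0 := fun i hi => hx i (by omega)
    have hkk : x - a k ≠ 0 := hx k (by omega)
    rw [pf, Finset.prod_range_succ, ← pf, derivative_mul]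
    simp only [eval_add, eval_mul, eval_sub, eval_X, eval_C, derivative_sub,
      derivative_X, derivative_C, sub_zero, eval_one, mul_one]
    rw [ih hk, eval_pf, Finset.prod_range_succ, Finset.sum_range_succ]
    field_simp

lemma eval_pf_nat (m k : ℕ) :
    (pf (fun i => (i : ℚ)) k).eval (m : ℚ) = (k.factorial : ℚ) * (m.choose k) := by
  induction k with
  | zero => simp [pf]
  | succ k ih =>
    rw [pf, Finset.prod_range_succ, ← pf, eval_mul, ih]
    simp only [eval_sub, eval_X, eval_C]
    rcases le_or_gt k m with h | h
    · have hc : ((m.choose (k+1) : ℚ)) * (k+1) = (m.choose k) * ((m : ℚ) - k) := by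
        have h2 := congrArg (Nat.cast : ℕ → ℚ) (Nat.choose_succ_right_eq m k)
        push_cast [Nat.cast_sub h] at h2
        exact h2
      push_cast [Nat.factorial_succ]
      linear_combination -(k.factorial : ℚ) * hc
    · have h1 : m.choose k = 0 := Nat.choose_eq_zero_of_lt h
      have h2 : m.choose (k+1) = 0 := Nat.choose_eq_zero_of_lt (by omega)
      simp [h1, h2]

lemma vandermondeQ (m n : ℕ) :
    ∑ k ∈ range (n+1), (m.choose k : ℚ) * (n.choose k) = ((m+n).choose n : ℚ) := by
  have h := Nat.add_choose_eq m n n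
  rw [Finset.Nat.sum_antidiagonal_eq_sum_range_succ_mk] at h
  have h2 : ∑ k ∈ range (n+1), m.choose k * n.choose (n - k)
      = ∑ k ∈ range (n+1), m.choose k * n.choose k := by
    apply Finset.sum_congr rfl
    intro k hk
    rw [Nat.choose_symm (by simpa using Nat.lt_succ_iff.mp (mem_range.mp hk))]
  rw [h2] at h
  rw [h]
  push_cast
  rfl

lemma eval_prod_asc (n m : ℕ) :
    ∏ i ∈ range n, ((m:ℚ) - (-(i+1) : ℚ)) = (n.factorial : ℚ) * ((m+n).choose n) := by
  induction n with
  | zero => simp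
  | succ n ih =>
    rw [Finset.prod_range_succ, ih]
    have key := congrArg (Nat.cast : ℕ → ℚ) (Nat.add_one_mul_choose_eq (m+n) n)
    push_cast [Nat.succ_eq_add_one] at key
    push_cast
    rw [Nat.factorial_succ]
    have hmn : m + (n + 1) = m + n + 1 := by omega
    rw [hmn]
    push_cast
    linear_combination (n.factorial : ℚ) * key

noncomputable def Ppoly (n : ℕ) : Polynomial ℚ :=
  ∑ k ∈ range (n+1), C ((n.choose k : ℚ) / k.factorial) * pf (fun i => (i : ℚ)) k

noncomputable def Qpoly (n : ℕ) : Polynomial ℚ :=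
  C ((n.factorial : ℚ)⁻¹) * pf (fun i => (-(i+1) : ℚ)) n

lemma eval_P (n m : ℕ) : (Ppoly n).eval (m : ℚ) = ((m+n).choose n : ℚ) := by
  rw [Ppoly, eval_finset_sum, ← vandermondeQ m n]
  apply Finset.sum_congr rfl
  intro k _
  rw [eval_mul, eval_C, eval_pf_nat]
  have : (k.factorial : ℚ) ≠ 0 := by positivity
  field_simp

lemma eval_Q (n m : ℕ) : (Qpoly n).eval (m : ℚ) = ((m+n).choose n : ℚ) := by
  rw [Qpoly, eval_mul, eval_C, eval_pf, eval_prod_asc]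
  have : (n.factorial : ℚ) ≠ 0 := by positivity
  field_simp

lemma PQ (n : ℕ) : Ppoly n = Qpoly n := by
  have h0 : Ppoly n - Qpoly n = 0 := by
    apply Polynomial.eq_zero_of_infinite_isRoot
    apply Set.Infinite.mono (s := Set.range (Nat.cast : ℕ → ℚ))
    · rintro x ⟨m, rfl⟩
      simp [IsRoot, eval_P, eval_Q]
    · exact Set.infinite_range_of_injective Nat.cast_injective
  exact sub_eq_zero.mp h0

lemma eval_DP (n : ℕ) :
    (derivative (Ppoly n)).eval (n : ℚ)
      = ∑ k ∈ range (n+1), (n.choose k : ℚ)^2 * ∑ i ∈ range k, ((n:ℚ) - i)⁻¹ := by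
  rw [Ppoly, derivative_sum, eval_finset_sum]
  apply Finset.sum_congr rfl
  intro k hk
  have hkn : k ≤ n := Nat.lt_succ_iff.mp (mem_range.mp hk)
  have hx : ∀ i < k, (n:ℚ) - (fun i => (i:ℚ)) i ≠ 0 := by
    intro i hi
    have : (i : ℚ) < n := by exact_mod_cast lt_of_lt_of_le hi hkn
    simp only
    intro hcon
    nlinarith
  rw [derivative_C_mul, eval_mul, eval_C, eval_deriv_pf _ _ _ hx]
  have hprod : (∏ i ∈ range k, ((n:ℚ) - (fun i => (i:ℚ)) i))
      = (k.factorial : ℚ) * (n.choose k) := by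
    rw [← eval_pf, eval_pf_nat]
  rw [hprod]
  have hf : (k.factorial : ℚ) ≠ 0 := by positivity
  field_simp

lemma eval_DQ (n : ℕ) :
    (derivative (Qpoly n)).eval (n : ℚ)
      = ((2*n).choose n : ℚ) * ∑ i ∈ range n, ((n:ℚ) + i + 1)⁻¹ := by
  rw [Qpoly, derivative_C_mul, eval_mul, eval_C]
  have hx : ∀ i < n, (n:ℚ) - (fun i => (-(i+1) : ℚ)) i ≠ 0 := by
    intro i hi
    have h0 : (0:ℚ) ≤ (n:ℚ) := Nat.cast_nonneg n
    have h1 : (0:ℚ) ≤ (i:ℚ) := Nat.cast_nonneg i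
    simp only
    intro hcon
    nlinarith
  rw [eval_deriv_pf _ _ _ hx]
  have hprod : (∏ i ∈ range n, ((n:ℚ) - (fun i => (-(i+1) : ℚ)) i))
      = (n.factorial : ℚ) * ((2*n).choose n) := by
    have := eval_prod_asc n n
    rw [two_mul]
    exact this
  rw [hprod]
  have hs : ∑ i ∈ range n, ((n:ℚ) - (fun i => (-(i+1) : ℚ)) i)⁻¹
      = ∑ i ∈ range n, ((n:ℚ) + i + 1)⁻¹ := by
    apply Finset.sum_congr rfl
    intro i _
    ring_nf
  rw [hs]
  have hf : (n.factorial : ℚ) ≠ 0 := by positivity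
  field_simp

lemma key_identity (n : ℕ) :
    ∑ k ∈ range (n+1), (n.choose k : ℚ)^2 * ∑ i ∈ range k, ((n:ℚ) - i)⁻¹
      = ((2*n).choose n : ℚ) * ∑ i ∈ range n, ((n:ℚ) + i + 1)⁻¹ := by
  rw [← eval_DP, ← eval_DQ, PQ]

lemma harmonic_add (m k : ℕ) :
    harmonicQ (m + k) = harmonicQ m + ∑ i ∈ range k, ((m:ℚ) + i + 1)⁻¹ := by
  rw [harmonicQ, harmonicQ, Finset.sum_range_add]
  congr 1
  apply Finset.sum_congr rfl
  intro i _
  rw [one_div]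
  push_cast
  ring_nf

lemma harmonic_2n (n : ℕ) :
    ∑ i ∈ range n, ((n:ℚ) + i + 1)⁻¹ = harmonicQ (2*n) - harmonicQ n := by
  rw [two_mul, harmonic_add]
  ring

lemma hsum_eq (n k : ℕ) (hk : k ≤ n) :
    ∑ i ∈ range k, ((n:ℚ) - i)⁻¹ = harmonicQ n - harmonicQ (n - k) := by
  have h1 : harmonicQ n = harmonicQ (n - k) + ∑ i ∈ range k, (((n-k : ℕ):ℚ) + i + 1)⁻¹ := by
    rw [← harmonic_add, Nat.sub_add_cancel hk]
  rw [h1]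
  have h2 : ∑ i ∈ range k, ((n:ℚ) - i)⁻¹
      = ∑ i ∈ range k, (((n-k : ℕ):ℚ) + i + 1)⁻¹ := by
    rw [← Finset.sum_range_reflect (fun i => (((n-k : ℕ):ℚ) + i + 1)⁻¹) k]
    apply Finset.sum_congr rfl
    intro i hi
    have hik : i < k := mem_range.mp hi
    congr 1
    have e1 : ((n - k : ℕ) : ℚ) = (n:ℚ) - k := by
      push_cast [Nat.cast_sub hk]; ring
    have e2 : ((k - 1 - i : ℕ) : ℚ) = (k:ℚ) - 1 - i := by
      have : ((k - 1 - i : ℕ) : ℚ) = ((k - (1 + i) : ℕ) : ℚ) := by norm_num [Nat.sub_sub]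
      rw [this, Nat.cast_sub (by omega)]
      push_cast; ring
    rw [e1, e2]
    ring
  rw [h2]
  ring

lemma sum_sq (n : ℕ) :
    ∑ k ∈ range (n+1), (n.choose k : ℚ)^2 = ((2*n).choose n : ℚ) := by
  have := vandermondeQ n n
  rw [two_mul]
  rw [← this]
  apply Finset.sum_congr rfl
  intro k _
  ring

theorem stmt0 (n : ℕ) :
    ∑ k ∈ range (n + 1), (n.choose k : ℚ) ^ 2 * harmonicQ k
      = ((2 * n).choose n : ℚ) * (2 * harmonicQ n - harmonicQ (2 * n)) := by
  have key := key_identity n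
  have hL : ∑ k ∈ range (n+1), (n.choose k : ℚ)^2 * ∑ i ∈ range k, ((n:ℚ) - i)⁻¹
      = ∑ k ∈ range (n+1), (n.choose k : ℚ)^2 * (harmonicQ n - harmonicQ (n - k)) := by
    apply Finset.sum_congr rfl
    intro k hk
    rw [hsum_eq n k (Nat.lt_succ_iff.mp (mem_range.mp hk))]
  rw [hL, harmonic_2n] at key
  have hsplit : ∑ k ∈ range (n+1), (n.choose k : ℚ)^2 * (harmonicQ n - harmonicQ (n - k))
      = (∑ k ∈ range (n+1), (n.choose k : ℚ)^2) * harmonicQ n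
        - ∑ k ∈ range (n+1), (n.choose k : ℚ)^2 * harmonicQ (n - k) := by
    rw [Finset.sum_mul, ← Finset.sum_sub_distrib]
    apply Finset.sum_congr rfl
    intro k _
    ring
  have hreflect : ∑ k ∈ range (n+1), (n.choose k : ℚ)^2 * harmonicQ (n - k)
      = ∑ k ∈ range (n+1), (n.choose k : ℚ)^2 * harmonicQ k := by
    rw [← Finset.sum_range_reflect (fun k => (n.choose k : ℚ)^2 * harmonicQ k) (n+1)]
    apply Finset.sum_congr rfl
    intro k hk
    have hkn : k ≤ n := Nat.lt_succ_iff.mp (mem_range.mp hk)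
    have h1 : n + 1 - 1 - k = n - k := by omega
    rw [h1, Nat.choose_symm hkn]
  rw [hsplit, hreflect, sum_sq] at key
  linarith [key]
end

section
/- For all natural numbers n and λ, the sum over k from 0 to n of C(n,k) * C(n+λn, n-k) * H_{λn+k} equals C(2n+λn, n) * (2*H_{λn+n} - H_{λn+2n}). -/
open Finset Polynomial

lemma harm_succ (m : ℕ) : harmonicQ (m + 1) = harmonicQ m + 1 / (m + 1) := by
  simp [harmonicQ, Finset.sum_range_succ]

lemma harm_diff (t : ℕ) : ∀ r : ℕ, r ≤ t →
    harmonicQ t - harmonicQ (t - r) = ∑ i ∈ range r, (1:ℚ)/((t:ℚ) - i) := by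
  intro r
  induction r with
  | zero => simp
  | succ r ih =>
    intro h
    have hr : r ≤ t := by omega
    rw [Finset.sum_range_succ, ← ih hr]
    have h1 : t - r = (t - (r+1)) + 1 := by omega
    have h2 : harmonicQ (t - r) = harmonicQ (t - (r+1)) + 1/((t:ℚ) - r) := by
      rw [h1, harm_succ]
      congr 1
      have : ((t - (r+1) : ℕ) : ℚ) = (t:ℚ) - (r+1) := by
        push_cast [h]; ring
      rw [this]; ring_nf
    rw [h2]; ring

lemma descF_eq (M r : ℕ) : M.descFactorial r = M.choose r * r.factorial := by
  rcases le_or_gt r M with h | h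
  · have h1 := Nat.factorial_mul_descFactorial h
    have h2 := Nat.choose_mul_factorial_mul_factorial h
    have h3 : 0 < (M - r).factorial := Nat.factorial_pos _
    apply Nat.eq_of_mul_eq_mul_left h3
    rw [h1, ← h2]; ring
  · rw [Nat.descFactorial_eq_zero_iff_lt.mpr h, Nat.choose_eq_zero_of_lt h, zero_mul]

lemma vdm (m n : ℕ) : ∑ j ∈ range (n+1), n.choose j * m.choose (n-j) = (m+n).choose n := by
  rw [Nat.add_choose_eq, Finset.Nat.sum_antidiagonal_eq_sum_range_succ_mk,
    ← Finset.sum_range_reflect]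
  apply Finset.sum_congr rfl
  intro j hj
  simp only [Finset.mem_range] at hj
  have h1 : n + 1 - 1 - j = n - j := by omega
  have h2 : n - (n - j) = j := by omega
  rw [h1, h2, mul_comm]

lemma derivEval (t : ℕ) : ∀ r : ℕ, r ≤ t →
    (Polynomial.derivative (descPochhammer ℚ r)).eval (t:ℚ)
      = (t.descFactorial r : ℚ) * ∑ i ∈ range r, (1:ℚ)/((t:ℚ) - i) := by
  intro r
  induction r with
  | zero => simp
  | succ r ih =>
    intro h
    have hr : r ≤ t := by omega
    have htr : ((t:ℚ) - r) ≠ 0 := by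
      have : (r:ℚ) < t := by exact_mod_cast (by omega : r < t)
      intro hc; linarith
    rw [descPochhammer_succ_right, derivative_mul, derivative_sub, derivative_X,
      derivative_natCast, sub_zero, mul_one, eval_add, eval_mul, ih hr,
      eval_sub, eval_X, eval_natCast, descPochhammer_eval_eq_descFactorial,
      Finset.sum_range_succ, Nat.descFactorial_succ]
    have hcast : ((t - r : ℕ) : ℚ) = (t:ℚ) - r := by push_cast [hr]; ring
    push_cast [hcast]
    field_simp

lemma polyV (n : ℕ) :
    ∑ j ∈ range (n+1), Polynomial.C ((n.choose j : ℚ) * (n.factorial : ℚ) / ((n-j).factorial : ℚ))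
        * descPochhammer ℚ (n-j)
      = (descPochhammer ℚ n).comp (X + (n:ℚ[X])) := by
  have key : ∀ m : ℕ, (∑ j ∈ range (n+1), Polynomial.C ((n.choose j : ℚ) * (n.factorial : ℚ) / ((n-j).factorial : ℚ))
        * descPochhammer ℚ (n-j)).eval (m:ℚ)
      = ((descPochhammer ℚ n).comp (X + (n:ℚ[X]))).eval (m:ℚ) := by
    intro m
    rw [eval_comp, eval_add, eval_X, eval_natCast, eval_finset_sum]
    have : ((m:ℚ) + n) = ((m + n : ℕ) : ℚ) := by push_cast; ring
    rw [this, descPochhammer_eval_eq_descFactorial]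
    have hterm : ∀ j ∈ range (n+1),
        (Polynomial.C ((n.choose j : ℚ) * (n.factorial : ℚ) / ((n-j).factorial : ℚ))
          * descPochhammer ℚ (n-j)).eval (m:ℚ)
        = (n.factorial : ℚ) * ((n.choose j : ℚ) * (m.choose (n-j) : ℚ)) := by
      intro j hj
      rw [eval_mul, eval_C, descPochhammer_eval_eq_descFactorial, descF_eq]
      have hf : ((n-j).factorial : ℚ) ≠ 0 := by exact_mod_cast (Nat.factorial_pos _).ne'
      push_cast
      field_simp
    rw [Finset.sum_congr rfl hterm, ← Finset.mul_sum]
    have hv : ∑ j ∈ range (n+1), ((n.choose j : ℚ) * (m.choose (n-j) : ℚ))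
        = ((m+n).choose n : ℚ) := by
      rw [← vdm m n]; push_cast; rfl
    rw [hv, descF_eq]
    push_cast
    ring
  have h2 : (∑ j ∈ range (n+1), Polynomial.C ((n.choose j : ℚ) * (n.factorial : ℚ) / ((n-j).factorial : ℚ))
        * descPochhammer ℚ (n-j))
      - (descPochhammer ℚ n).comp (X + (n:ℚ[X])) = 0 := by
    apply Polynomial.eq_zero_of_infinite_isRoot
    apply Set.Infinite.mono (s := Set.range ((↑) : ℕ → ℚ))
    · rintro x ⟨m, rfl⟩
      simp only [IsRoot, eval_sub, Set.mem_setOf_eq]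
      rw [key m, sub_self]
    · exact Set.infinite_range_of_injective Nat.cast_injective
  exact sub_eq_zero.mp h2

theorem stmt1 (n l : ℕ) :
    ∑ k ∈ range (n + 1), (n.choose k : ℚ) * ((n + l * n).choose (n - k) : ℚ) * harmonicQ (l * n + k)
      = ((2 * n + l * n).choose n : ℚ) * (2 * harmonicQ (l * n + n) - harmonicQ (l * n + 2 * n)) := by
  set M := n + l * n with hM
  have hMn : n ≤ M := by omega
  -- differentiate polyV and evaluate at M
  have hD := congrArg (fun p => (Polynomial.derivative p).eval (M:ℚ)) (polyV n)
  simp only [derivative_sum, derivative_C_mul, derivative_comp, derivative_add, derivative_X,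
    derivative_natCast, add_zero, one_mul, eval_finset_sum, eval_mul, eval_C, eval_comp,
    eval_add, eval_X, eval_natCast] at hD
  -- rewrite each side using derivEval and harm_diff
  have hMn' : ((M:ℚ) + n) = ((M + n : ℕ) : ℚ) := by push_cast; ring
  rw [hMn'] at hD
  rw [derivEval (M+n) n (by omega)] at hD
  have hL : ∀ j ∈ range (n+1),
      (n.choose j : ℚ) * (n.factorial : ℚ) / ((n-j).factorial : ℚ)
        * (Polynomial.derivative (descPochhammer ℚ (n-j))).eval (M:ℚ)
      = (n.factorial : ℚ) * ((n.choose j : ℚ) * (M.choose (n-j) : ℚ)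
          * (harmonicQ M - harmonicQ (l * n + j))) := by
    intro j hj
    simp only [Finset.mem_range] at hj
    have hjn : j ≤ n := by omega
    have hrM : n - j ≤ M := by omega
    rw [derivEval M (n-j) hrM, ← harm_diff M (n-j) hrM, descF_eq]
    have h1 : M - (n - j) = l * n + j := by omega
    rw [h1]
    have hf : ((n-j).factorial : ℚ) ≠ 0 := by exact_mod_cast (Nat.factorial_pos _).ne'
    push_cast
    field_simp
  rw [Finset.sum_congr rfl hL, ← Finset.mul_sum, ← harm_diff (M+n) n (by omega)] at hD
  have h2 : M + n - n = M := by omega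
  rw [h2, descF_eq] at hD
  -- Vandermonde in ℚ
  have hv : ∑ j ∈ range (n+1), ((n.choose j : ℚ) * (M.choose (n-j) : ℚ))
      = ((M+n).choose n : ℚ) := by
    rw [← vdm M n]; push_cast; rfl
  have hexp : ∑ j ∈ range (n+1), ((n.choose j : ℚ) * (M.choose (n-j) : ℚ)
          * (harmonicQ M - harmonicQ (l * n + j)))
      = harmonicQ M * ((M+n).choose n : ℚ)
        - ∑ j ∈ range (n+1), ((n.choose j : ℚ) * (M.choose (n-j) : ℚ) * harmonicQ (l * n + j)) := by
    rw [← hv, Finset.mul_sum, ← Finset.sum_sub_distrib]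
    apply Finset.sum_congr rfl
    intro j _
    ring
  rw [hexp] at hD
  have hfac : (n.factorial : ℚ) ≠ 0 := by exact_mod_cast (Nat.factorial_pos _).ne'
  have hidx1 : l * n + n = M := by omega
  have hidx2 : l * n + 2 * n = M + n := by omega
  have hidx3 : 2 * n + l * n = M + n := by omega
  rw [hidx1, hidx2, hidx3]
  have hS : ∑ k ∈ range (n + 1), (n.choose k : ℚ) * ((n + l * n).choose (n - k) : ℚ) * harmonicQ (l * n + k)
      = ∑ j ∈ range (n+1), ((n.choose j : ℚ) * (M.choose (n-j) : ℚ) * harmonicQ (l * n + j)) := by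
    apply Finset.sum_congr rfl
    intro j _
    rw [hM]
  rw [hS]
  have hDf : harmonicQ M * ((M+n).choose n : ℚ)
        - ∑ j ∈ range (n+1), ((n.choose j : ℚ) * (M.choose (n-j) : ℚ) * harmonicQ (l * n + j))
      = ((M+n).choose n : ℚ) * (harmonicQ (M+n) - harmonicQ M) := by
    have := hD
    push_cast at this
    apply mul_left_cancel₀ hfac
    linear_combination this
  linarith
end

section
/- For all natural numbers n, λ, μ, the sum over k from 0 to n of C(n+μn, k) * C(n+λn, n-k) * H_{λn+k} equals C(2n+λn+μn, n) * (H_{λn+n} + H_{λn+μn+n} - H_{λn+μn+2n}). -/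
open Finset

lemma harmonicQ_succ (m : ℕ) : harmonicQ (m + 1) = harmonicQ m + 1 / ((m : ℚ) + 1) := by
  simp [harmonicQ, Finset.sum_range_succ]

lemma step_lemma (A nn : ℕ) (X : ℚ) :
    ((A + nn + 1).choose nn : ℚ) * (X + harmonicQ (A + 1) - harmonicQ (A + nn + 1))
      + ((A + nn + 1).choose (nn + 1) : ℚ) * (X + harmonicQ A - harmonicQ (A + nn + 1))
    = ((A + nn + 2).choose (nn + 1) : ℚ) * (X + harmonicQ (A + 1) - harmonicQ (A + nn + 2)) := by
  have h1 : harmonicQ (A + 1) = harmonicQ A + 1 / ((A : ℚ) + 1) := harmonicQ_succ A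
  have h2 : harmonicQ (A + nn + 2) = harmonicQ (A + nn + 1) + 1 / ((A : ℚ) + nn + 2) := by
    have := harmonicQ_succ (A + nn + 1)
    rw [show A + nn + 1 + 1 = A + nn + 2 from rfl] at this
    rw [this]; push_cast; ring_nf
  have h3 : ((A + nn + 2).choose (nn + 1) : ℚ)
      = ((A + nn + 1).choose nn : ℚ) + ((A + nn + 1).choose (nn + 1) : ℚ) := by
    exact_mod_cast (Nat.choose_succ_succ (A + nn + 1) nn)
  have h4 : ((A : ℚ) + nn + 2) * ((A + nn + 1).choose nn : ℚ)
      = ((A + nn + 2).choose (nn + 1) : ℚ) * ((nn : ℚ) + 1) := by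
    have h5 := Nat.add_one_mul_choose_eq (A + nn + 1) nn
    rw [show A + nn + 1 + 1 = A + nn + 2 from rfl] at h5
    exact_mod_cast h5
  rw [h3] at h4
  have hq : ((A + nn + 1).choose (nn + 1) : ℚ) * ((A : ℚ) + nn + 2)
      = (((A + nn + 1).choose nn : ℚ) + ((A + nn + 1).choose (nn + 1) : ℚ)) * ((A : ℚ) + 1) := by
    linear_combination -h4
  rw [h1, h2, h3]
  have hu : (1 / ((A : ℚ) + 1)) * ((A : ℚ) + 1) = 1 := by
    have : ((A : ℚ) + 1) ≠ 0 := by positivity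
    field_simp
  have hv : (1 / ((A : ℚ) + nn + 2)) * ((A : ℚ) + nn + 2) = 1 := by
    have : ((A : ℚ) + nn + 2) ≠ 0 := by positivity
    field_simp
  linear_combination (-(1 / ((A : ℚ) + 1)) * (1 / ((A : ℚ) + nn + 2))) * hq
    + (-(((A + nn + 1).choose nn : ℚ) + ((A + nn + 1).choose (nn + 1) : ℚ)) * (1 / ((A : ℚ) + nn + 2))) * hu
    + (((A + nn + 1).choose (nn + 1) : ℚ) * (1 / ((A : ℚ) + 1))) * hv

lemma aux : ∀ a c n : ℕ,
    ∑ k ∈ range (n + 1), (a.choose k : ℚ) * ((c + n).choose (n - k) : ℚ) * harmonicQ (c + k)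
      = ((a + c + n).choose n : ℚ) *
        (harmonicQ (c + n) + harmonicQ (a + c) - harmonicQ (a + c + n)) := by
  intro a
  induction a with
  | zero =>
    intro c n
    rw [Finset.sum_eq_single 0]
    · simp
    · intro k _ hk
      rw [Nat.choose_eq_zero_of_lt (by omega)]
      simp
    · simp
  | succ a ih =>
    intro c n
    match n with
    | 0 =>
      simp
    | nn + 1 =>
      have key : ∑ k ∈ range (nn + 1 + 1),
            ((a + 1).choose k : ℚ) * ((c + (nn + 1)).choose (nn + 1 - k) : ℚ) * harmonicQ (c + k)
          = (∑ k ∈ range (nn + 1),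
              (a.choose k : ℚ) * ((c + 1 + nn).choose (nn - k) : ℚ) * harmonicQ (c + 1 + k))
            + ∑ k ∈ range (nn + 1 + 1),
              (a.choose k : ℚ) * ((c + (nn + 1)).choose (nn + 1 - k) : ℚ) * harmonicQ (c + k) := by
        rw [Finset.sum_range_succ' (fun k => ((a + 1).choose k : ℚ) * ((c + (nn + 1)).choose (nn + 1 - k) : ℚ) * harmonicQ (c + k)) (nn + 1),
            Finset.sum_range_succ' (fun k => (a.choose k : ℚ) * ((c + (nn + 1)).choose (nn + 1 - k) : ℚ) * harmonicQ (c + k)) (nn + 1)]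
        have hpt : ∑ k ∈ range (nn + 1),
              ((a + 1).choose (k + 1) : ℚ) * ((c + (nn + 1)).choose (nn + 1 - (k + 1)) : ℚ) * harmonicQ (c + (k + 1))
            = ∑ k ∈ range (nn + 1),
              ((a.choose k : ℚ) * ((c + 1 + nn).choose (nn - k) : ℚ) * harmonicQ (c + 1 + k)
                + (a.choose (k + 1) : ℚ) * ((c + (nn + 1)).choose (nn + 1 - (k + 1)) : ℚ) * harmonicQ (c + (k + 1))) := by
          apply Finset.sum_congr rfl
          intro i _
          have hc : (a + 1).choose (i + 1) = a.choose i + a.choose (i + 1) :=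
            Nat.choose_succ_succ a i
          have e1 : c + (nn + 1) = c + 1 + nn := by omega
          have e2 : c + (i + 1) = c + 1 + i := by omega
          have e3 : nn + 1 - (i + 1) = nn - i := by omega
          rw [hc, e3]
          rw [show ((c + (nn + 1)).choose (nn - i) : ℚ) = ((c + 1 + nn).choose (nn - i) : ℚ) from by rw [e1]]
          rw [show harmonicQ (c + (i + 1)) = harmonicQ (c + 1 + i) from by rw [e2]]
          push_cast
          ring
        rw [hpt, Finset.sum_add_distrib]
        simp only [Nat.choose_zero_right, Nat.cast_one]
        ring
      rw [key, ih (c + 1) nn, ih c (nn + 1)]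
      have e1 : a + (c + 1) + nn = a + c + nn + 1 := by omega
      have e2 : a + (c + 1) = a + c + 1 := by omega
      have e3 : a + c + (nn + 1) = a + c + nn + 1 := by omega
      have e4 : c + 1 + nn = c + (nn + 1) := by omega
      have e5 : a + 1 + c + (nn + 1) = a + c + nn + 2 := by omega
      have e6 : a + 1 + c = a + c + 1 := by omega
      rw [e1, e2, e3, e4, e5, e6]
      exact step_lemma (a + c) nn (harmonicQ (c + (nn + 1)))

theorem stmt2 (n l m : ℕ) :
    ∑ k ∈ range (n + 1), ((n + m * n).choose k : ℚ) * ((n + l * n).choose (n - k) : ℚ) * harmonicQ (l * n + k)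
      = ((2 * n + l * n + m * n).choose n : ℚ) *
        (harmonicQ (l * n + n) + harmonicQ (l * n + m * n + n) - harmonicQ (l * n + m * n + 2 * n)) := by
  have h := aux (n + m * n) (l * n) n
  rw [show l * n + n = n + l * n from by omega] at h
  rw [show n + m * n + l * n + n = 2 * n + l * n + m * n from by omega] at h
  rw [show n + m * n + l * n = l * n + m * n + n from by omega] at h
  rw [h]
  rw [show n + l * n = l * n + n from by omega,
      show 2 * n + l * n + m * n = l * n + m * n + 2 * n from by omega]
end

section
/- For natural numbers m ≤ n, the derivative at x = 0 of the function x ↦ C(x+n, m) (generalized binomial coefficient in x) equals C(n,m) * (H_n - H_{n-m}). -/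
open Finset

noncomputable def harmonicR (m : Nat) : ℝ := ∑ j ∈ Finset.range m, (1 : ℝ) / (j + 1)

lemma harm_diff_s4 (n m : ℕ) (hmn : m ≤ n) :
    ∑ i ∈ Finset.range m, ((n : ℝ) - i)⁻¹ = harmonicR n - harmonicR (n - m) := by
  unfold harmonicR
  rw [eq_sub_iff_add_eq]
  have h : (Finset.range n).sum (fun j => (1:ℝ)/(j+1)) =
      ∑ j ∈ Finset.Ico (n-m) n, (1:ℝ)/(j+1) + ∑ j ∈ Finset.range (n-m), (1:ℝ)/(j+1) := by
    rw [Finset.range_eq_Ico, ← Finset.sum_Ico_consecutive (fun j => (1:ℝ)/(j+1))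
      (Nat.zero_le (n-m)) (Nat.sub_le n m), ← Finset.range_eq_Ico, add_comm]
  rw [h, add_left_cancel_iff.mpr rfl]
  rw [Finset.sum_Ico_eq_sum_range]
  have hnm : n - (n - m) = m := Nat.sub_sub_self hmn
  rw [hnm]
  rw [← Finset.sum_range_reflect (fun i => (1:ℝ)/(↑(n - m + i) + 1)) m]
  congr 1
  apply Finset.sum_congr rfl
  intro i hi
  simp only [Finset.mem_range] at hi
  have h1 : n - m + (m - 1 - i) = n - 1 - i := by omega
  rw [h1]
  have h2 : n - 1 - i + 1 = n - i := by omega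
  have h3 : ((n - 1 - i : ℕ) : ℝ) + 1 = (n : ℝ) - i := by
    have : ((n - i : ℕ) : ℝ) = (n : ℝ) - i := by
      rw [Nat.cast_sub (by omega)]
    rw [← h2] at this
    push_cast at this ⊢
    linarith
  rw [h3, one_div]

theorem stmt4 (n m : ℕ) (hmn : m ≤ n) :
    deriv (fun x : ℝ => (∏ i ∈ Finset.range m, (x + n - i)) / (m.factorial : ℝ)) 0
      = (n.choose m : ℝ) * (harmonicR n - harmonicR (n - m)) := by
  have hD : HasDerivAt (fun x : ℝ => ∏ i ∈ Finset.range m, (x + (n : ℝ) - i))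
      (∑ i ∈ Finset.range m,
        (∏ j ∈ (Finset.range m).erase i, ((0:ℝ) + (n : ℝ) - j)) • (1:ℝ)) 0 := by
    apply HasDerivAt.fun_finsetProd
    intro i _
    exact ((hasDerivAt_id (0:ℝ)).add_const (n : ℝ)).sub_const (i : ℝ)
  have hne : ∀ i ∈ Finset.range m, (n : ℝ) - (i : ℝ) ≠ 0 := by
    intro i hi
    simp only [Finset.mem_range] at hi
    have : (i : ℝ) < (n : ℝ) := by exact_mod_cast lt_of_lt_of_le hi hmn
    linarith
  set P : ℝ := ∏ j ∈ Finset.range m, ((n : ℝ) - j) with hPdef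
  have hsum : (∑ i ∈ Finset.range m,
        (∏ j ∈ (Finset.range m).erase i, ((0:ℝ) + (n : ℝ) - j)) • (1:ℝ))
      = P * ∑ i ∈ Finset.range m, ((n : ℝ) - i)⁻¹ := by
    rw [Finset.mul_sum]
    apply Finset.sum_congr rfl
    intro i hi
    have h1 : (∏ j ∈ (Finset.range m).erase i, ((0:ℝ) + (n : ℝ) - j))
        = ∏ j ∈ (Finset.range m).erase i, ((n : ℝ) - j) := by
      apply Finset.prod_congr rfl; intro j _; ring
    rw [smul_eq_mul, mul_one, h1]
    have h2 : (∏ j ∈ (Finset.range m).erase i, ((n : ℝ) - j)) * ((n : ℝ) - i) = P :=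
      Finset.prod_erase_mul _ _ hi
    field_simp [hne i hi]
    linarith [h2]
  have hP : P = (n.descFactorial m : ℝ) := by
    rw [Nat.descFactorial_eq_prod_range, Nat.cast_prod]
    apply Finset.prod_congr rfl
    intro i hi
    simp only [Finset.mem_range] at hi
    rw [Nat.cast_sub (le_of_lt (lt_of_lt_of_le hi hmn))]
  have hchoose : P / (m.factorial : ℝ) = (n.choose m : ℝ) := by
    rw [hP, Nat.descFactorial_eq_factorial_mul_choose]
    have : (m.factorial : ℝ) ≠ 0 := by positivity
    push_cast
    field_simp
  rw [deriv_div_const, hD.deriv, hsum, harm_diff_s4 n m hmn]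
  rw [mul_comm P, mul_div_assoc, hchoose, mul_comm]
end

section
/- For all natural numbers n, the sum over k from 0 to n of C(n,k)^2 * C(2n+k, k) * (H_{2n+k} - H_k) equals 2 * C(2n,n)^2 * (H_{2n} - H_n). -/
open Finset

set_option maxRecDepth 8000
set_option maxHeartbeats 1000000

namespace Stmt5Aux

open Polynomial

section Core
variable {R : Type*} [CommRing R]

def U0 (nv x : R) : R :=
  (30*nv^4+109*nv^3+147*nv^2+87*nv+19) + (43*nv^3+117*nv^2+105*nv+31)*x
    + (20*nv^2+37*nv+17)*x^2 + (3*nv+3)*x^3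

def U1 (nv x : R) : R :=
  (21*nv^3+55*nv^2+47*nv+13) + (28*nv^2+48*nv+20)*x + (13*nv+11)*x^2 + 2*x^3

theorem rec_core (x nv jv a b p1 p2 p3 : R)
    (hrel : b * (jv+1) = a * (nv-jv))
    (hshift : (x+jv+2) * p2 = p1 * (2*nv+jv+2+x))
    (hstep : p3 = p1 * (x+2*nv+jv+2) * (x+2*nv+jv+3)) :
    (x+jv+2) * ((2*nv+1)*(2*nv+2)*(x+2*nv+1)^2*(x+2*nv+2)^2 * b^2 * p1
      - (nv+1)^2*(x+nv+1)^2 * (a+b)^2 * p3)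
    = (x+jv+2) * ((x+jv+2) * ((nv+1)*(U0 nv x - (jv+2)*(U1 nv x))) * b^2 * p2
      - (x+jv+1) * ((nv+1)*(U0 nv x - (jv+1)*(U1 nv x))) * a^2 * p1) := by
  unfold U0 U1
  linear_combination (-((x+jv+2) * ((nv+1)*(((30*nv^4+109*nv^3+147*nv^2+87*nv+19) + (43*nv^3+117*nv^2+105*nv+31)*x
    + (20*nv^2+37*nv+17)*x^2 + (3*nv+3)*x^3) - (jv+2)*((21*nv^3+55*nv^2+47*nv+13) + (28*nv^2+48*nv+20)*x + (13*nv+11)*x^2 + 2*x^3))) * b^2)) * hshift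
    + (-((nv+1)^2*(x+nv+1)^2*(x+jv+2)*(a+b)^2)) * hstep
    + (((-24 : R) + (-80 : R)*x + (-102 : R)*x^2 + (-62 : R)*x^3 + (-18 : R)*x^4 + (-2 : R)*x^5 + (-40 : R)*jv + (-92 : R)*jv*x + (-80 : R)*jv*x^2 + (-30 : R)*jv*x^3 + (-4 : R)*jv*x^4 + (-14 : R)*jv^2 + (-22 : R)*jv^2*x + (-12 : R)*jv^2*x^2 + (-2 : R)*jv^2*x^3 + (-104 : R)*nv + (-308 : R)*nv*x + (-328 : R)*nv*x^2 + (-156 : R)*nv*x^3 + (-32 : R)*nv*x^4 + (-2 : R)*nv*x^5 + (-180 : R)*nv*jv + (-340 : R)*nv*jv*x + (-226 : R)*nv*jv*x^2 + (-58 : R)*nv*jv*x^3 + (-4 : R)*nv*jv*x^4 + (-64 : R)*nv*jv^2 + (-74 : R)*nv*jv^2*x + (-26 : R)*nv*jv^2*x^2 + (-2 : R)*nv*jv^2*x^3 + (-160 : R)*nv^2 + (-424 : R)*nv^2*x + (-364 : R)*nv^2*x^2 + (-124 : R)*nv^2*x^3 + (-14 : R)*nv^2*x^4 + (-296 : R)*nv^2*jv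 + (-444 : R)*nv^2*jv*x + (-206 : R)*nv^2*jv*x^2 + (-28 : R)*nv^2*jv*x^3 + (-108 : R)*nv^2*jv^2 + (-82 : R)*nv^2*jv^2*x + (-14 : R)*nv^2*jv^2*x^2 + (-96 : R)*nv^3 + (-240 : R)*nv^3*x + (-156 : R)*nv^3*x^2 + (-30 : R)*nv^3*x^3 + (-208 : R)*nv^3*jv + (-236 : R)*nv^3*jv*x + (-60 : R)*nv^3*jv*x^2 + (-80 : R)*nv^3*jv^2 + (-30 : R)*nv^3*jv^2*x + (-8 : R)*nv^4 + (-40 : R)*nv^4*x + (-18 : R)*nv^4*x^2 + (-48 : R)*nv^4*jv + (-40 : R)*nv^4*jv*x + (-22 : R)*nv^4*jv^2 + (8 : R)*nv^5 + (4 : R)*nv^5*x + (4 : R)*nv^5*jv) * a + ((32 : R) + (80 : R)*x + (88 : R)*x^2 + (52 : R)*x^3 + (16 : R)*x^4 + (2 : R)*x^5 + (40 : R)*jv + (80 : R)*jv*x + (66 : R)*jv*x^2 + (26 : R)*jv*x^3 + (4 : R)*jv*x^4 + (12 : R)*jv^2 + (18 : R)*jv^2*x + (10 : R)*jv^2*x^2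 + (2 : R)*jv^2*x^3 + (160 : R)*nv + (336 : R)*nv*x + (296 : R)*nv*x^2 + (132 : R)*nv*x^3 + (28 : R)*nv*x^4 + (2 : R)*nv*x^5 + (192 : R)*nv*jv + (308 : R)*nv*jv*x + (190 : R)*nv*jv*x^2 + (50 : R)*nv*jv*x^3 + (4 : R)*nv*jv*x^4 + (56 : R)*nv*jv^2 + (62 : R)*nv*jv^2*x + (22 : R)*nv*jv^2*x^2 + (2 : R)*nv*jv^2*x^3 + (304 : R)*nv^2 + (520 : R)*nv^2*x + (348 : R)*nv^2*x^2 + (106 : R)*nv^2*x^3 + (12 : R)*nv^2*x^4 + (344 : R)*nv^2*jv + (420 : R)*nv^2*jv*x + (176 : R)*nv^2*jv*x^2 + (24 : R)*nv^2*jv*x^3 + (96 : R)*nv^2*jv^2 + (70 : R)*nv^2*jv^2*x + (12 : R)*nv^2*jv^2*x^2 + (272 : R)*nv^3 + (360 : R)*nv^3*x + (164 : R)*nv^3*x^2 + (26 : R)*nv^3*x^3 + (280 : R)*nv^3*jv + (236 : R)*nv^3*jv*x + (52 : R)*nv^3*jv*x^2 + (72 : R)*nv^3*jv^2 + (26 :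 R)*nv^3*jv^2*x + (112 : R)*nv^4 + (104 : R)*nv^4*x + (24 : R)*nv^4*x^2 + (96 : R)*nv^4*jv + (44 : R)*nv^4*jv*x + (20 : R)*nv^4*jv^2 + (16 : R)*nv^5 + (8 : R)*nv^5*x + (8 : R)*nv^5*jv) * b) * p1 * hrel

theorem rec0_core (x nv p1 p2 p3 : R)
    (hshift : (x+1) * p2 = p1 * (2*nv+x+1))
    (hstep : p3 = p1 * (x+2*nv+1) * (x+2*nv+2)) :
    (x+1) * ((2*nv+1)*(2*nv+2)*(x+2*nv+1)^2*(x+2*nv+2)^2 * p1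
      - (nv+1)^2*(x+nv+1)^2 * p3)
    = (x+1) * ((x+1) * ((nv+1)*(U0 nv x - U1 nv x)) * p2) := by
  unfold U0 U1
  linear_combination (-((x+1)*((nv+1)*(((30*nv^4+109*nv^3+147*nv^2+87*nv+19) + (43*nv^3+117*nv^2+105*nv+31)*x
    + (20*nv^2+37*nv+17)*x^2 + (3*nv+3)*x^3) - ((21*nv^3+55*nv^2+47*nv+13) + (28*nv^2+48*nv+20)*x + (13*nv+11)*x^2 + 2*x^3))))) * hshift
    + (-((x+1)*(nv+1)^2*(x+nv+1)^2)) * hstep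

end Core

/-- `pp m c = ∏_{j=1}^m (X + c + j)` -/
noncomputable def pp (m c : ℕ) : Polynomial ℚ :=
  ∏ j ∈ Finset.range m, (X + C ((c : ℚ) + j + 1))

lemma pp_zero (c : ℕ) : pp 0 c = 1 := by simp [pp]

lemma pp_succ (m c : ℕ) : pp (m+1) c = pp m c * (X + C ((c : ℚ) + m + 1)) := by
  rw [pp, Finset.prod_range_succ]; rfl

lemma pp_shift (m c : ℕ) :
    (X + C ((c : ℚ) + 1)) * pp m (c+1) = pp m c * (X + C ((c : ℚ) + m + 1)) := by
  have h2 : pp (m+1) c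
      = (∏ j ∈ Finset.range m, (X + C ((c:ℚ) + ↑(j+1) + 1))) * (X + C ((c:ℚ) + ↑(0:ℕ) + 1)) :=
    Finset.prod_range_succ' (fun j => X + C ((c:ℚ) + j + 1)) m
  have key : ∏ j ∈ Finset.range m, (X + C ((c:ℚ) + ↑(j+1) + 1)) = pp m (c+1) := by
    apply Finset.prod_congr rfl
    intro j _
    congr 1
    push_cast
    ring
  rw [key] at h2
  simp only [Nat.cast_zero, add_zero] at h2
  rw [pp_succ] at h2
  linear_combination -h2

lemma pp_ne_zero (m c : ℕ) : pp m c ≠ 0 := by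
  apply Finset.prod_ne_zero_iff.mpr
  intro j _
  exact Polynomial.X_add_C_ne_zero _

/-- cleared WZ certificate -/
noncomputable def gg (n : ℕ) : ℕ → Polynomial ℚ
  | 0 => 0
  | (j+1) => (X + C ((j : ℚ) + 1)) * ((C (n:ℚ)+1) * (U0 (C (n:ℚ)) X - (C (j:ℚ)+1)*(U1 (C (n:ℚ)) X)))
      * (C ((n.choose j : ℚ)))^2 * pp (2*n) (j+1)

noncomputable def AL (n : ℕ) : Polynomial ℚ :=
  (2*C (n:ℚ)+1)*(2*C (n:ℚ)+2)*(X+2*C (n:ℚ)+1)^2*(X+2*C (n:ℚ)+2)^2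

noncomputable def BE (n : ℕ) : Polynomial ℚ := (C (n:ℚ)+1)^2*(X+C (n:ℚ)+1)^2

theorem rec (n k : ℕ) (hk : k ≤ n + 1) :
    AL n * (C ((n.choose k : ℚ)))^2 * pp (2*n) k
      - BE n * (C (((n+1).choose k : ℚ)))^2 * pp (2*n+2) k
    = gg n (k+1) - gg n k := by
  have hstep : pp (2*n+2) k = pp (2*n) k
      * (X + C ((k:ℚ) + 2*n + 1)) * (X + C ((k:ℚ) + 2*n + 2)) := by
    have h1 := pp_succ (2*n+1) k
    have h2 := pp_succ (2*n) k
    rw [h2] at h1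
    rw [show (2*n+1+1) = 2*n+2 from rfl] at h1
    rw [h1]
    push_cast
    ring_nf
  cases k with
  | zero =>
    have hshift := pp_shift (2*n) 0
    have hc := rec0_core (R := Polynomial ℚ) X (C (n:ℚ)) (pp (2*n) 0) (pp (2*n) 1) (pp (2*n+2) 0)
      (by simp only [Nat.cast_zero, zero_add, Nat.cast_mul, Nat.cast_ofNat, map_add, map_mul,
            map_one, map_ofNat] at hshift
          linear_combination hshift)
      (by simp only [Nat.cast_zero, zero_add, Nat.cast_mul, Nat.cast_ofNat, map_add, map_mul,
            map_one, map_ofNat] at hstep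
          linear_combination hstep)
    refine mul_left_cancel₀ (a := X + (1 : Polynomial ℚ)) (by
      have := Polynomial.X_add_C_ne_zero (1 : ℚ)
      simpa using this) ?_
    simp only [gg, Nat.choose_zero_right, Nat.cast_one, map_one, Nat.cast_zero, zero_add,
      one_pow, mul_one, sub_zero, map_zero, map_add]
    unfold AL BE
    linear_combination hc
  | succ j =>
    have hj : j ≤ n := by omega
    have hrelN := Nat.choose_succ_right_eq n j
    have hrel : (C ((n.choose (j+1) : ℚ))) * (C (j:ℚ) + 1)
        = (C ((n.choose j : ℚ))) * (C (n:ℚ) - C (j:ℚ)) := by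
      have : ((n.choose (j+1) : ℚ)) * ((j:ℚ) + 1) = ((n.choose j : ℚ)) * ((n:ℚ) - (j:ℚ)) := by
        rw [← Nat.cast_sub hj]
        exact_mod_cast hrelN
      calc (C ((n.choose (j+1) : ℚ))) * (C (j:ℚ) + 1)
          = C (((n.choose (j+1) : ℚ)) * ((j:ℚ) + 1)) := by simp [map_mul, map_add]
        _ = C (((n.choose j : ℚ)) * ((n:ℚ) - (j:ℚ))) := by rw [this]
        _ = (C ((n.choose j : ℚ))) * (C (n:ℚ) - C (j:ℚ)) := by simp [map_mul, map_sub]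
    have hshift := pp_shift (2*n) (j+1)
    have hAB : (C (((n+1).choose (j+1) : ℚ)) : Polynomial ℚ)
        = C ((n.choose j : ℚ)) + C ((n.choose (j+1) : ℚ)) := by
      rw [Nat.choose_succ_succ' n j]
      push_cast
      simp [map_add]
    have hc := rec_core (R := Polynomial ℚ) X (C (n:ℚ)) (C (j:ℚ))
      (C ((n.choose j : ℚ))) (C ((n.choose (j+1) : ℚ)))
      (pp (2*n) (j+1)) (pp (2*n) (j+2)) (pp (2*n+2) (j+1))
      hrel
      (by simp only [Nat.cast_add, Nat.cast_one, Nat.cast_mul, Nat.cast_ofNat, map_add, map_mul,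
            map_one, map_ofNat] at hshift
          linear_combination hshift)
      (by have := hstep
          simp only [Nat.cast_add, Nat.cast_one, Nat.cast_mul, Nat.cast_ofNat, map_add, map_mul,
            map_one, map_ofNat] at this
          linear_combination this)
    refine mul_left_cancel₀ (a := X + C ((j:ℚ)) + 2) (by
      have h2 : (X + C ((j:ℚ)) + 2 : Polynomial ℚ) = X + C ((j:ℚ)+2) := by
        simp only [map_add, map_ofNat]
        ring
      rw [h2]
      exact Polynomial.X_add_C_ne_zero _) ?_
    rw [hAB]
    show (X + C ((j:ℚ)) + 2) * (AL n * (C ((n.choose (j+1) : ℚ)))^2 * pp (2*n) (j+1)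
        - BE n * (C ((n.choose j : ℚ)) + C ((n.choose (j+1) : ℚ)))^2 * pp (2*n+2) (j+1))
      = (X + C ((j:ℚ)) + 2) * (gg n (j+2) - gg n (j+1))
    simp only [gg, Nat.cast_add, Nat.cast_one, map_add, map_one]
    unfold AL BE
    linear_combination hc

noncomputable def LL (n : ℕ) : Polynomial ℚ :=
  ∑ k ∈ Finset.range (n+1), (C ((n.choose k : ℚ)))^2 * pp (2*n) k

lemma sumrec (n : ℕ) : AL n * LL n = BE n * LL (n+1) := by
  have h1 : ∑ k ∈ Finset.range (n+2),
      (AL n * (C ((n.choose k : ℚ)))^2 * pp (2*n) k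
        - BE n * (C (((n+1).choose k : ℚ)))^2 * pp (2*n+2) k)
      = ∑ k ∈ Finset.range (n+2), (gg n (k+1) - gg n k) := by
    refine Finset.sum_congr rfl (fun k hk => rec n k ?_)
    have := Finset.mem_range.mp hk
    omega
  rw [Finset.sum_range_sub (gg n)] at h1
  have hgtop : gg n (n+2) = 0 := by
    show gg n ((n+1)+1) = 0
    simp [gg, Nat.choose_succ_self]
  have hg0 : gg n 0 = 0 := rfl
  rw [hgtop, hg0, sub_zero] at h1
  rw [Finset.sum_sub_distrib] at h1
  have e1 : ∑ k ∈ Finset.range (n+2), AL n * (C ((n.choose k : ℚ)))^2 * pp (2*n) k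
      = AL n * LL n := by
    rw [Finset.sum_range_succ, Nat.choose_succ_self]
    rw [LL, Finset.mul_sum]
    simp [mul_assoc]
  have e2 : ∑ k ∈ Finset.range (n+2), BE n * (C (((n+1).choose k : ℚ)))^2 * pp (2*n+2) k
      = BE n * LL (n+1) := by
    rw [LL, Finset.mul_sum]
    apply Finset.sum_congr rfl
    intro k _
    rw [show 2*(n+1) = 2*n+2 from by ring, mul_assoc]
  rw [e1, e2] at h1
  linear_combination h1

lemma BE_ne_zero (n : ℕ) : BE n ≠ 0 := by
  unfold BE
  apply mul_ne_zero
  · apply pow_ne_zero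
    intro h
    have : ((n:ℚ)+1) = 0 := by
      have := congrArg (fun p => Polynomial.coeff p 0) h
      simpa using this
    have : (0:ℚ) < (n:ℚ)+1 := by positivity
    linarith
  · apply pow_ne_zero
    have h2 : (X + C ((n:ℚ)) + 1 : Polynomial ℚ) = X + C ((n:ℚ)+1) := by
      simp only [map_add, map_one]
      ring
    rw [h2]
    exact Polynomial.X_add_C_ne_zero _

theorem main (n : ℕ) : LL n * C ((n.factorial : ℚ)^2) * (pp n 0)^2
    = C (((2*n).factorial : ℚ)) * (pp (2*n) 0)^2 := by
  induction n with
  | zero => simp [LL, pp]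
  | succ n ih =>
    refine mul_left_cancel₀ (BE_ne_zero n) ?_
    have hs := sumrec n
    have hp1 : pp (n+1) 0 = pp n 0 * (X + C ((n:ℚ)+1)) := by
      rw [pp_succ]
      simp only [Nat.cast_zero, zero_add]
    have hp2 : pp (2*(n+1)) 0 = pp (2*n) 0 * (X + C (2*(n:ℚ)+1)) * (X + C (2*(n:ℚ)+2)) := by
      rw [show 2*(n+1) = (2*n+1)+1 from by ring, pp_succ, pp_succ]
      push_cast
      ring_nf
    have hf1 : ((n+1).factorial : ℚ)^2 = ((n:ℚ)+1)^2 * ((n.factorial : ℚ))^2 := by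
      rw [Nat.factorial_succ]
      push_cast
      ring
    have hf2 : ((2*(n+1)).factorial : ℚ)
        = (2*(n:ℚ)+2) * (2*(n:ℚ)+1) * (((2*n).factorial : ℚ)) := by
      rw [show 2*(n+1) = (2*n+1)+1 from by ring, Nat.factorial_succ, Nat.factorial_succ]
      push_cast
      ring
    rw [hp1, hp2, hf1, hf2]
    rw [show C (2*(n:ℚ)+1) = 2*C ((n:ℚ))+1 from by simp only [map_add, map_mul, map_ofNat, map_one]]
    rw [show C (2*(n:ℚ)+2) = 2*C ((n:ℚ))+2 from by simp only [map_add, map_mul, map_ofNat]]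
    rw [show C ((n:ℚ)+1) = C ((n:ℚ))+1 from by simp only [map_add, map_one]]
    rw [show C (((n:ℚ)+1)^2 * ((n.factorial : ℚ))^2)
        = C (((n:ℚ)+1)^2) * C (((n.factorial : ℚ))^2) from by rw [map_mul]]
    rw [show C ((2*(n:ℚ)+2) * (2*(n:ℚ)+1) * (((2*n).factorial : ℚ)))
        = (2*C ((n:ℚ))+2) * (2*C ((n:ℚ))+1) * C (((2*n).factorial : ℚ)) from by
      simp only [map_mul, map_add, map_ofNat, map_one]]
    unfold AL BE at hs
    unfold BE
    rw [show C (((n:ℚ)+1)^2) = (C ((n:ℚ))+1)^2 from by rw [map_pow, map_add, map_one]]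
    linear_combination ((2*C ((n:ℚ))+1)*(2*C ((n:ℚ))+2)*(X+2*C ((n:ℚ))+1)^2*(X+2*C ((n:ℚ))+2)^2
        * (C ((n:ℚ))+1)^2 * (X + C ((n:ℚ)) + 1)^2) * ih
      - ((C ((n:ℚ))+1)^2 * C (((n.factorial : ℚ))^2) * (pp n 0 * (X + C ((n:ℚ)) + 1))^2) * hs

lemma coeff1_mul (p q : Polynomial ℚ) :
    (p*q).coeff 1 = p.coeff 0 * q.coeff 1 + p.coeff 1 * q.coeff 0 := by
  rw [Polynomial.coeff_mul, Finset.Nat.sum_antidiagonal_eq_sum_range_succ_mk]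
  simp [Finset.sum_range_succ]

lemma harmonic_succ (m : ℕ) : harmonicQ (m+1) = harmonicQ m + 1/((m:ℚ)+1) := by
  simp [harmonicQ, Finset.sum_range_succ]

lemma harmonic_zero : harmonicQ 0 = 0 := rfl

lemma hfact (m c : ℕ) : ((m+c+1).choose c : ℚ) * (((m+1).factorial : ℚ))
    = ((m+c).choose c : ℚ) * ((m.factorial : ℚ)) * ((c:ℚ)+(m:ℚ)+1) := by
  have hnat : (m+c).choose c * (m+c+1) = (m+c+1).choose c * (m+1) := by
    have h := Nat.choose_mul_succ_eq (m+c) c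
    rw [show m+c+1-c = m+1 from by omega] at h
    exact h
  have hq : ((m+c).choose c : ℚ) * ((m:ℚ)+(c:ℚ)+1) = ((m+c+1).choose c : ℚ) * ((m:ℚ)+1) := by
    exact_mod_cast hnat
  rw [Nat.factorial_succ]
  push_cast
  linear_combination (-(m.factorial:ℚ)) * hq

lemma pp0 (m c : ℕ) : (pp m c).coeff 0 = ((m+c).choose c : ℚ) * (m.factorial : ℚ) := by
  induction m with
  | zero => simp [pp]
  | succ m ih =>
    rw [pp_succ, Polynomial.mul_coeff_zero, ih]
    have hx : (X + C ((c:ℚ)+(m:ℚ)+1) : Polynomial ℚ).coeff 0 = (c:ℚ)+(m:ℚ)+1 := by simp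
    rw [hx]
    rw [show m+1+c = m+c+1 from by omega]
    linear_combination (-1 : ℚ) * hfact m c

lemma pp1 (m c : ℕ) : (pp m c).coeff 1
    = ((m+c).choose c : ℚ) * (m.factorial : ℚ) * (harmonicQ (m+c) - harmonicQ c) := by
  induction m with
  | zero =>
    rw [pp_zero, Polynomial.coeff_one]
    simp
  | succ m ih =>
    rw [pp_succ, coeff1_mul, ih, pp0]
    have hx : (X + C ((c:ℚ)+(m:ℚ)+1) : Polynomial ℚ).coeff 0 = (c:ℚ)+(m:ℚ)+1 := by simp
    have hy : (X + C ((c:ℚ)+(m:ℚ)+1) : Polynomial ℚ).coeff 1 = 1 := by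
      rw [Polynomial.coeff_add, Polynomial.coeff_X_one, Polynomial.coeff_C]
      norm_num
    rw [hx, hy]
    rw [show m+1+c = (m+c)+1 from by omega, harmonic_succ]
    have hf := hfact m c
    have hne : ((m:ℚ)+(c:ℚ)+1) ≠ 0 := by positivity
    have key : ((m+c+1).choose c : ℚ) * (((m+1).factorial : ℚ)) * (1/((m:ℚ)+(c:ℚ)+1))
        = ((m+c).choose c : ℚ) * ((m.factorial : ℚ)) := by
      rw [hf]
      rw [show ((c:ℚ)+(m:ℚ)+1) = ((m:ℚ)+(c:ℚ)+1) from by ring]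
      rw [mul_one_div, mul_div_assoc, div_self hne, mul_one]
    push_cast
    linear_combination (harmonicQ c - harmonicQ (m+c)) * hf - key

lemma LL0 (n : ℕ) : (LL n).coeff 0
    = (∑ k ∈ Finset.range (n+1), (n.choose k:ℚ)^2 * ((2*n+k).choose k : ℚ))
      * ((2*n).factorial :ℚ) := by
  rw [LL, Polynomial.finset_sum_coeff, Finset.sum_mul]
  refine Finset.sum_congr rfl (fun k _ => ?_)
  rw [show ((C ((n.choose k:ℚ)))^2 : Polynomial ℚ) = C ((n.choose k:ℚ)^2) from by rw [map_pow]]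
  rw [Polynomial.coeff_C_mul, pp0]
  ring

lemma LL1 (n : ℕ) : (LL n).coeff 1
    = (∑ k ∈ Finset.range (n+1), (n.choose k:ℚ)^2 * ((2*n+k).choose k : ℚ)
        * (harmonicQ (2*n+k) - harmonicQ k))
      * ((2*n).factorial :ℚ) := by
  rw [LL, Polynomial.finset_sum_coeff, Finset.sum_mul]
  refine Finset.sum_congr rfl (fun k _ => ?_)
  rw [show ((C ((n.choose k:ℚ)))^2 : Polynomial ℚ) = C ((n.choose k:ℚ)^2) from by rw [map_pow]]
  rw [Polynomial.coeff_C_mul, pp1]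
  ring

end Stmt5Aux

theorem stmt5 (n : ℕ) :
    ∑ k ∈ range (n + 1), (n.choose k : ℚ) ^ 2 * ((2 * n + k).choose k : ℚ) * (harmonicQ (2 * n + k) - harmonicQ k)
      = 2 * ((2 * n).choose n : ℚ) ^ 2 * (harmonicQ (2 * n) - harmonicQ n) := by
  classical
  set a : ℚ := ((2*n).factorial : ℚ) with ha
  set b : ℚ := (n.factorial : ℚ) with hb
  set Hn : ℚ := harmonicQ n with hHn
  set H2n : ℚ := harmonicQ (2*n) with hH2n
  set T : ℚ := ∑ k ∈ range (n + 1), (n.choose k : ℚ) ^ 2 * ((2 * n + k).choose k : ℚ)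
      * (harmonicQ (2 * n + k) - harmonicQ k) with hT
  set S0 : ℚ := ∑ k ∈ range (n + 1), (n.choose k : ℚ) ^ 2 * ((2 * n + k).choose k : ℚ) with hS0
  have hane : a ≠ 0 := by
    rw [ha]; exact_mod_cast Nat.factorial_ne_zero (2*n)
  have hbne : b ≠ 0 := by
    rw [hb]; exact_mod_cast Nat.factorial_ne_zero n
  have hCB : ((2*n).choose n : ℚ) * b * b = a := by
    rw [ha, hb]
    have := Nat.choose_mul_factorial_mul_factorial (show n ≤ 2*n from by omega)
    rw [show 2*n-n = n from by omega] at this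
    exact_mod_cast this
  have hm := Stmt5Aux.main n
  have hq0 : (Stmt5Aux.pp n 0).coeff 0 = b := by
    rw [Stmt5Aux.pp0]; simp [hb]
  have hq1 : (Stmt5Aux.pp n 0).coeff 1 = b * Hn := by
    rw [Stmt5Aux.pp1]; simp [hb, hHn, harmonicQ]
  have hr0 : (Stmt5Aux.pp (2*n) 0).coeff 0 = a := by
    rw [Stmt5Aux.pp0]; simp [ha]
  have hr1 : (Stmt5Aux.pp (2*n) 0).coeff 1 = a * H2n := by
    rw [Stmt5Aux.pp1]; simp [ha, hH2n, harmonicQ]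
  have hsq : (Stmt5Aux.pp n 0)^2 = (Stmt5Aux.pp n 0) * (Stmt5Aux.pp n 0) := sq _
  have hsq2 : (Stmt5Aux.pp (2*n) 0)^2 = (Stmt5Aux.pp (2*n) 0) * (Stmt5Aux.pp (2*n) 0) := sq _
  have h0 := congrArg (fun p : Polynomial ℚ => p.coeff 0) hm
  have h1 := congrArg (fun p : Polynomial ℚ => p.coeff 1) hm
  simp only [hsq, hsq2] at h0 h1
  simp only [Polynomial.mul_coeff_zero, Stmt5Aux.coeff1_mul, Polynomial.coeff_C_zero,
    Polynomial.coeff_C, one_ne_zero, if_false, Stmt5Aux.LL0, Stmt5Aux.LL1, hq0, hq1, hr0, hr1,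
    mul_zero, zero_mul, add_zero, zero_add, if_true] at h0 h1
  rw [← ha, ← hb] at h0 h1
  rw [← hS0] at h0 h1
  rw [← hT] at h1
  -- h0 : S0 * a * b^2-ish ... ; final algebra
  refine mul_right_cancel₀ (show a * b^4 ≠ 0 from by positivity) ?_
  have expand : (2 * ((2 * n).choose n : ℚ) ^ 2 * (H2n - Hn)) * (a * b^4)
      = 2 * a^3 * (H2n - Hn) := by
    have hCB2 : ((2*n).choose n : ℚ)^2 * b^4 = a^2 := by
      linear_combination (((2*n).choose n : ℚ) * b * b + a) * hCB
    linear_combination (2 * a * (H2n - Hn)) * hCB2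
  rw [expand]
  linear_combination h1 - 2 * Hn * h0
end

section
/- For all natural numbers n, the sum over k from 0 to n of C(n,k) * C(2n,k) * C(3n+k, k) * (H_{3n+k} - H_k) equals C(3n,n)^2 * (2*H_{3n} - H_n - H_{2n}). -/
open Finset

section SaalschutzAux

open Polynomial

variable {R : Type*} [CommRing R]




def poch (x : R) (k : ℕ) : R := ∏ i ∈ Finset.range k, (x + i)

lemma poch_zero (x : R) : poch x 0 = 1 := by simp [poch]

lemma poch_succ_top (x : R) (k : ℕ) : poch x (k+1) = poch x k * (x + k) :=
  Finset.prod_range_succ _ _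

lemma poch_succ_bot (x : R) (k : ℕ) : poch x (k+1) = x * poch (x+1) k := by
  rw [poch, Finset.prod_range_succ']
  simp [poch, mul_comm]
  congr 1
  apply Finset.prod_congr rfl
  intro i _
  ring

lemma choose_key (m j : ℕ) (e : R) :
    ((m+1).choose (j+1) : R) * (e + j + 1) =
      e * (m.choose (j+1) : R) + (m.choose j : R) * (e + m + 1) := by
  have h1 : ((m+1).choose (j+1) : R) = (m.choose j : R) + (m.choose (j+1) : R) := by
    rw [Nat.choose_succ_succ]; push_cast; ring
  have h2 := congrArg (Nat.cast (R := R)) (Nat.add_one_mul_choose_eq m j)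
  push_cast at h2
  linear_combination e * h1 - h2

lemma T1 (m j : ℕ) (hj : j ≤ m) (c e : R) :
    ((m+1).choose (j+1) : R) * poch (c + j + 1) (m-j) * poch (e + j + 1) (m-j)
    = (c + m) * e * (m.choose (j+1) : R) * poch (c + j + 1) (m-(j+1))
        * poch (e + j + 2) (m-(j+1))
      + (m.choose j : R) * poch (c + j + 1) (m-j) * poch (e + j + 2) (m-j) := by
  rcases eq_or_lt_of_le hj with h | h
  · subst h
    simp [Nat.choose_succ_self, poch_zero, Nat.sub_self]
  · obtain ⟨i, hi⟩ : ∃ i, m - j = i + 1 := ⟨m - j - 1, by omega⟩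
    have hji : m - (j+1) = i := by omega
    have him : (j:R) + 1 + i = m := by
      have : j + 1 + i = m := by omega
      exact_mod_cast congrArg (Nat.cast (R := R)) this
    rw [hi, hji, poch_succ_top (c + j + 1) i, poch_succ_bot (e + j + 1) i,
      poch_succ_top (e + j + 2) i]
    have hc : c + j + 1 + i = c + m := by linear_combination him
    have he : e + j + 2 + i = e + m + 1 := by linear_combination him
    rw [hc, he]
    have harg : e + j + 1 + 1 = e + j + 2 := by ring
    rw [harg]
    linear_combination (poch (c + (j:R) + 1) i * poch (e + (j:R) + 2) i * (c + (m:R))) * choose_key m j e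
def LLt (m : ℕ) (a b c : R) (k : ℕ) : R :=
  (-1:R)^k * (m.choose k : R) * poch a k * poch b k * poch (c + k) (m - k) *
    poch ((a + b - c + 1 - m) + k) (m - k)

def LL (m : ℕ) (a b c : R) : R := ∑ k ∈ Finset.range (m+1), LLt m a b c k

lemma T0 (m : ℕ) (c e : R) :
    poch c (m+1) * poch e (m+1) = (c+m) * e * (poch c m * poch (e+1) m) := by
  rw [poch_succ_top c m, poch_succ_bot e m]; ring

lemma LL_step (m : ℕ) (a b c : R) :
    LL (m+1) a b c = (c + m) * (a + b - c - m) * LL m a b c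
      - a * b * LL m (a+1) (b+1) (c+1) := by
  set e : R := a + b - c - m with he
  have key : ∀ j ∈ Finset.range (m+1),
      LLt (m+1) a b c (j+1)
        = (c + (m:R)) * e * LLt m a b c (j+1) + (-(a*b)) * LLt m (a+1) (b+1) (c+1) j := by
    intro j hj
    simp only [Finset.mem_range, Nat.lt_succ_iff] at hj
    unfold LLt
    rw [Nat.succ_sub_succ]
    have e1 : c + ((j+1:ℕ):R) = c + (j:R) + 1 := by push_cast; ring
    have e2 : (a+b-c+1-((m+1:ℕ):R)) + ((j+1:ℕ):R) = e + (j:R) + 1 := by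
      rw [he]; push_cast; ring
    have e3 : (a+b-c+1-((m:ℕ):R)) + ((j+1:ℕ):R) = e + (j:R) + 2 := by
      rw [he]; push_cast; ring
    have e4 : ((a+1)+(b+1)-(c+1)+1-((m:ℕ):R)) + ((j:ℕ):R) = e + (j:R) + 2 := by
      rw [he]; push_cast; ring
    have e5 : (c+1) + ((j:ℕ):R) = c + (j:R) + 1 := by push_cast; ring
    rw [e1, e2, e3, e4, e5, poch_succ_bot a j, poch_succ_bot b j]
    linear_combination ((-1:R)^(j+1) * (a * poch (a+1) j) * (b * poch (b+1) j)) * T1 m j hj c e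
  have z0 : LLt (m+1) a b c 0 = (c + (m:R)) * e * LLt m a b c 0 := by
    unfold LLt
    simp only [pow_zero, Nat.choose_zero_right, Nat.cast_one, poch_zero, Nat.cast_zero,
      add_zero, Nat.sub_zero, one_mul, mul_one]
    have e2 : (a+b-c+1-((m+1:ℕ):R)) = e := by rw [he]; push_cast; ring
    have e3 : (a+b-c+1-((m:ℕ):R)) = e + 1 := by rw [he]; push_cast; ring
    rw [e2, e3, T0]
  have top : LLt m a b c (m+1) = 0 := by
    unfold LLt
    rw [Nat.choose_succ_self]
    simp
  calc LL (m+1) a b c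
      = (∑ j ∈ Finset.range (m+1), LLt (m+1) a b c (j+1)) + LLt (m+1) a b c 0 := by
        rw [LL, Finset.sum_range_succ']
    _ = (∑ j ∈ Finset.range (m+1),
          ((c + (m:R)) * e * LLt m a b c (j+1) + (-(a*b)) * LLt m (a+1) (b+1) (c+1) j))
        + (c + (m:R)) * e * LLt m a b c 0 := by
        rw [Finset.sum_congr rfl key, z0]
    _ = (c + (m:R)) * e * ((∑ j ∈ Finset.range (m+1), LLt m a b c (j+1)) + LLt m a b c 0)
        + (-(a*b)) * (∑ j ∈ Finset.range (m+1), LLt m (a+1) (b+1) (c+1) j) := by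
        rw [Finset.sum_add_distrib, ← Finset.mul_sum, ← Finset.mul_sum]
        ring
    _ = (c + (m:R)) * e * (∑ k ∈ Finset.range (m+2), LLt m a b c k)
        + (-(a*b)) * LL m (a+1) (b+1) (c+1) := by
        rw [Finset.sum_range_succ' (LLt m a b c) (m+1), LL]
    _ = (c + (m:R)) * e * (LL m a b c + LLt m a b c (m+1)) + (-(a*b)) * LL m (a+1) (b+1) (c+1) := by
        rw [Finset.sum_range_succ]
        rfl
    _ = (c + m) * e * LL m a b c - a * b * LL m (a+1) (b+1) (c+1) := by
        rw [top]; ring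

theorem saal (m : ℕ) : ∀ a b c : R,
    LL m a b c = (-1:R)^m * poch (c-a) m * poch (c-b) m := by
  induction m with
  | zero => intro a b c; simp [LL, LLt, poch_zero]
  | succ m ih =>
    intro a b c
    rw [LL_step, ih, ih]
    have h1 : (c+1) - (a+1) = c - a := by ring
    have h2 : (c+1) - (b+1) = c - b := by ring
    rw [h1, h2, poch_succ_top (c-a) m, poch_succ_top (c-b) m]
    ring

-- Part III: scalar lemmas over ℚ
lemma S1 (N : ℕ) : ∀ k, k ≤ N → (-1:ℚ)^k * poch (-(N:ℚ)) k = (N.choose k : ℚ) * (k.factorial : ℚ) := by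
  intro k
  induction k with
  | zero => intro _; simp [poch_zero]
  | succ k ih =>
    intro hk
    have hk' : k ≤ N := Nat.le_of_succ_le hk
    have hkN : k < N := hk
    have hsub : ((N - k : ℕ) : ℚ) = (N:ℚ) - k := by
      rw [Nat.cast_sub hk']
    have hc := congrArg (Nat.cast (R := ℚ)) (Nat.choose_succ_right_eq N k)
    push_cast at hc
    rw [hsub] at hc
    have hf : (((k+1).factorial : ℕ) : ℚ) = ((k:ℚ)+1) * (k.factorial : ℚ) := by
      rw [Nat.factorial_succ]; push_cast; ring
    rw [poch_succ_top]
    linear_combination ((N:ℚ) - k) * ih hk' - (k.factorial : ℚ) * hc - (N.choose (k+1) : ℚ) * hf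

lemma S2 (u : ℕ) : ∀ d : ℕ, poch ((u:ℚ)+1) d * (u.factorial : ℚ) = (((u+d).factorial : ℕ) : ℚ) := by
  intro d
  induction d with
  | zero => simp [poch_zero]
  | succ d ih =>
    have hf : (((u+d+1).factorial : ℕ) : ℚ) = ((u:ℚ)+d+1) * ((u+d).factorial : ℚ) := by
      rw [Nat.factorial_succ]; push_cast; ring
    rw [poch_succ_top, show u + (d+1) = (u+d)+1 from rfl, hf]
    push_cast
    linear_combination ((u:ℚ)+1+d) * ih

-- Part IV: polynomial bridges
open Polynomial in
lemma poch_C (q : ℚ) (k : ℕ) : poch (Polynomial.C q) k = Polynomial.C (poch q k) := by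
  induction k with
  | zero => simp [poch_zero]
  | succ k ih => rw [poch_succ_top, poch_succ_top, ih, map_mul, map_add, map_natCast]

open Polynomial in
lemma poch_CX (u : ℕ) (k : ℕ) :
    poch (Polynomial.C ((u:ℚ)) + Polynomial.X) k
      = ∏ i ∈ Finset.range k, (Polynomial.X + Polynomial.C (((u+i : ℕ)):ℚ)) := by
  unfold poch
  apply Finset.prod_congr rfl
  intro i _
  rw [show (((u+i:ℕ)):ℚ) = (u:ℚ)+(i:ℚ) from by push_cast; ring, map_add]
  rw [show ((i:ℕ):Polynomial ℚ) = Polynomial.C ((i:ℕ):ℚ) from (map_natCast _ i).symm]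
  ring

open Polynomial in
lemma ev0 (g : ℕ → ℚ) (k : ℕ) :
    (∏ i ∈ Finset.range k, (X + C (g i))).eval 0 = ∏ i ∈ Finset.range k, g i := by
  simp [Polynomial.eval_prod]

open Polynomial in
lemma dev0 (g : ℕ → ℚ) (k : ℕ) (hg : ∀ i, i < k → g i ≠ 0) :
    (Polynomial.derivative (∏ i ∈ Finset.range k, (X + C (g i)))).eval 0
      = (∏ i ∈ Finset.range k, g i) * ∑ i ∈ Finset.range k, (g i)⁻¹ := by
  induction k with
  | zero => simp
  | succ k ih =>
    rw [Finset.prod_range_succ, derivative_mul, eval_add, eval_mul, eval_mul,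
      ih (fun i hi => hg i (hi.trans (Nat.lt_succ_self _))),
      Finset.sum_range_succ, Finset.prod_range_succ, ev0]
    have h0 : g k ≠ 0 := hg k (Nat.lt_succ_self _)
    simp only [derivative_add, derivative_X, derivative_C, add_zero, eval_one, eval_add,
      eval_X, eval_C, zero_add]
    field_simp

open Polynomial in
lemma star (n : ℕ) :
    ∑ k ∈ Finset.range (n+1),
      Polynomial.C (((n.choose k * (2*n).choose k * n.factorial : ℕ)):ℚ)
        * (∏ i ∈ Finset.range k, (X + Polynomial.C (((3*n+1+i : ℕ)):ℚ)))
        * (∏ i ∈ Finset.range (n-k), (X + Polynomial.C (((k+1+i : ℕ)):ℚ)))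
    = Polynomial.C ((((3*n).choose n * n.factorial : ℕ)):ℚ)
        * ∏ i ∈ Finset.range n, (X + Polynomial.C (((2*n+1+i : ℕ)):ℚ)) := by
  have H := saal (R := Polynomial ℚ) n (Polynomial.C (-(2*(n:ℚ))))
    (Polynomial.C (((3*n+1:ℕ)):ℚ) + X) 1
  -- convert LHS of H
  have hL : LL n (Polynomial.C (-(2*(n:ℚ)))) (Polynomial.C (((3*n+1:ℕ)):ℚ) + X) 1
      = ∑ k ∈ Finset.range (n+1),
        Polynomial.C (((n.choose k * (2*n).choose k * n.factorial : ℕ)):ℚ)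
          * (∏ i ∈ Finset.range k, (X + Polynomial.C (((3*n+1+i : ℕ)):ℚ)))
          * (∏ i ∈ Finset.range (n-k), (X + Polynomial.C (((k+1+i : ℕ)):ℚ))) := by
    rw [LL]
    apply Finset.sum_congr rfl
    intro k hk
    rw [Finset.mem_range, Nat.lt_succ_iff] at hk
    unfold LLt
    have w2 : (1 : Polynomial ℚ) + ((k:ℕ) : Polynomial ℚ) = Polynomial.C (((k+1:ℕ)):ℚ) := by
      rw [show (((k+1:ℕ)):ℚ) = (1:ℚ) + (k:ℚ) from by push_cast; ring, map_add,
        map_natCast, map_one]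
    have w3 : (Polynomial.C (-(2*(n:ℚ))) + (Polynomial.C (((3*n+1:ℕ)):ℚ) + X) - 1 + 1
          - ((n:ℕ) : Polynomial ℚ)) + ((k:ℕ) : Polynomial ℚ)
        = Polynomial.C (((k+1:ℕ)):ℚ) + X := by
      rw [show (((k+1:ℕ)):ℚ) = -(2*(n:ℚ)) + ((3*n+1:ℕ):ℚ) - 1 + 1 - (n:ℚ) + (k:ℚ) from by
          push_cast; ring]
      rw [show ((n:ℕ) : Polynomial ℚ) = Polynomial.C ((n:ℚ)) from (map_natCast _ n).symm,
        show ((k:ℕ) : Polynomial ℚ) = Polynomial.C ((k:ℚ)) from (map_natCast _ k).symm]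
      simp only [map_add, map_sub, map_neg, map_one]
      ring
    rw [w2, w3, poch_C, poch_C, poch_CX, poch_CX]
    have sc : (-1:ℚ)^k * (n.choose k : ℚ) * poch (-(2*(n:ℚ))) k * poch (((k+1:ℕ)):ℚ) (n-k)
        = (((n.choose k * (2*n).choose k * n.factorial : ℕ)):ℚ) := by
      have h1 := S1 (2*n) k (by omega)
      have h2 := S2 k (n-k)
      rw [show k + (n-k) = n from by omega] at h2
      have h3 : poch (((k+1:ℕ)):ℚ) (n-k) = poch ((k:ℚ)+1) (n-k) := by
        norm_num
      rw [h3]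
      have hfac : (k.factorial : ℚ) ≠ 0 := by positivity
      apply mul_right_cancel₀ hfac
      push_cast
      push_cast at h1 h2
      linear_combination ((n.choose k:ℚ) * poch (-(2*(n:ℚ))) k * (-1:ℚ)^k) * h2
        + ((n.choose k:ℚ) * (n.factorial:ℚ)) * h1
    rw [show ((-1 : Polynomial ℚ)) = Polynomial.C (-1:ℚ) from by simp, ← map_pow,
      show ((n.choose k : ℕ) : Polynomial ℚ) = Polynomial.C ((n.choose k : ℕ):ℚ) from
        (map_natCast _ _).symm]
    rw [← sc]
    simp only [map_mul, map_pow, map_neg, map_one]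
    ring
  -- convert RHS of H
  have hR : (-1 : Polynomial ℚ)^n * poch ((1:Polynomial ℚ) - Polynomial.C (-(2*(n:ℚ)))) n
        * poch ((1:Polynomial ℚ) - (Polynomial.C (((3*n+1:ℕ)):ℚ) + X)) n
      = Polynomial.C ((((3*n).choose n * n.factorial : ℕ)):ℚ)
        * ∏ i ∈ Finset.range n, (X + Polynomial.C (((2*n+1+i : ℕ)):ℚ)) := by
    have r1 : (1:Polynomial ℚ) - Polynomial.C (-(2*(n:ℚ))) = Polynomial.C ((2*(n:ℚ))+1) := by
      simp only [map_add, map_mul, map_one, map_neg]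
      ring
    have scR : poch ((2*(n:ℚ))+1) n = ((((3*n).choose n * n.factorial : ℕ)):ℚ) := by
      have h2 := S2 (2*n) n
      rw [show 2*n+n = 3*n from by ring] at h2
      have h3 := Nat.choose_mul_factorial_mul_factorial (show n ≤ 3*n by omega)
      rw [show 3*n - n = 2*n from by omega] at h3
      have hfac : (((2*n).factorial : ℕ) : ℚ) ≠ 0 := by positivity
      apply mul_right_cancel₀ hfac
      have h3q := congrArg (Nat.cast (R := ℚ)) h3
      push_cast at h2 h3q ⊢
      linear_combination h2 - h3q
    have r2 : poch ((1:Polynomial ℚ) - (Polynomial.C (((3*n+1:ℕ)):ℚ) + X)) n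
        = (-1 : Polynomial ℚ)^n * ∏ i ∈ Finset.range n, (X + Polynomial.C (((3*n-i : ℕ)):ℚ)) := by
      unfold poch
      rw [show ((-1 : Polynomial ℚ))^n = ∏ _i ∈ Finset.range n, (-1 : Polynomial ℚ) from by
        rw [Finset.prod_const, Finset.card_range], ← Finset.prod_mul_distrib]
      apply Finset.prod_congr rfl
      intro i hi
      rw [Finset.mem_range] at hi
      have hcast : (((3*n - i:ℕ)):ℚ) = 3*(n:ℚ) - i := by
        rw [Nat.cast_sub (by omega)]; push_cast; ring
      rw [hcast, show ((i:ℕ) : Polynomial ℚ) = Polynomial.C ((i:ℚ)) from (map_natCast _ i).symm]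
      rw [show (((3*n+1:ℕ)):ℚ) = 3*(n:ℚ)+1 from by push_cast; ring]
      simp only [map_add, map_sub, map_mul, map_one, map_neg, Polynomial.map_ofNat]
      ring
    have r3 : ∏ i ∈ Finset.range n, (X + Polynomial.C (((3*n-i : ℕ)):ℚ))
        = ∏ i ∈ Finset.range n, (X + Polynomial.C (((2*n+1+i : ℕ)):ℚ)) := by
      rw [← Finset.prod_range_reflect (fun j => X + Polynomial.C (((2*n+1+j : ℕ)):ℚ)) n]
      apply Finset.prod_congr rfl
      intro i hi
      rw [Finset.mem_range] at hi
      rw [show 2*n+1+(n-1-i) = 3*n-i from by omega]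
    rw [r1, poch_C, scR, r2, r3]
    rw [show ((-1 : Polynomial ℚ))^n * (Polynomial.C ((((3*n).choose n * n.factorial : ℕ)):ℚ))
        * ((-1 : Polynomial ℚ)^n * ∏ i ∈ Finset.range n, (X + Polynomial.C (((2*n+1+i : ℕ)):ℚ)))
      = ((-1 : Polynomial ℚ)^n * (-1 : Polynomial ℚ)^n) * ((Polynomial.C ((((3*n).choose n * n.factorial : ℕ)):ℚ))
        * ∏ i ∈ Finset.range n, (X + Polynomial.C (((2*n+1+i : ℕ)):ℚ))) from by ring]
    rw [← pow_add]
    rw [Even.neg_one_pow ⟨n, rfl⟩]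
    rw [one_mul]
  rw [hL] at H
  rw [H, hR]

lemma PF (u : ℕ) : ∀ d : ℕ,
    (∏ i ∈ Finset.range d, ((u+1+i : ℕ):ℚ)) * (u.factorial:ℚ) = (((u+d).factorial:ℕ):ℚ) := by
  intro d
  induction d with
  | zero => simp
  | succ d ih =>
    rw [Finset.prod_range_succ, show u+(d+1) = (u+d)+1 from rfl]
    push_cast [Nat.factorial_succ]
    push_cast at ih
    linear_combination ((u:ℚ)+1+d) * ih

lemma tw (n k : ℕ) (hk : k ≤ n) :
    (((n.choose k * (2*n).choose k * n.factorial : ℕ)):ℚ)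
      * (∏ i ∈ Finset.range k, ((3*n+1+i:ℕ):ℚ)) * (∏ i ∈ Finset.range (n-k), ((k+1+i:ℕ):ℚ))
    = ((n.factorial:ℕ):ℚ)^2 * ((n.choose k:ℚ) * ((2*n).choose k:ℚ) * ((3*n+k).choose k:ℚ)) := by
  have h1 := PF (3*n) k
  have h2 := PF k (n-k)
  rw [show k + (n-k) = n from by omega] at h2
  have h3 := congrArg (Nat.cast (R:=ℚ))
    (Nat.choose_mul_factorial_mul_factorial (show k ≤ 3*n+k by omega))
  rw [show 3*n+k-k = 3*n from by omega] at h3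
  have hne : ((3*n).factorial:ℚ) * (k.factorial:ℚ) ≠ 0 := by positivity
  apply mul_right_cancel₀ hne
  push_cast at h1 h2 h3 ⊢
  linear_combination ((n.choose k:ℚ)*((2*n).choose k:ℚ)*(n.factorial:ℚ)
      *(∏ i ∈ Finset.range (n-k), ((k:ℚ)+1+(i:ℚ)))*(k.factorial:ℚ)) * h1
    + ((n.choose k:ℚ)*((2*n).choose k:ℚ)*(n.factorial:ℚ)*(((3*n+k).factorial:ℚ))) * h2
    - ((n.choose k:ℚ)*((2*n).choose k:ℚ)*(n.factorial:ℚ)^2) * h3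

lemma twR (n : ℕ) :
    ((((3*n).choose n * n.factorial : ℕ)):ℚ) * (∏ i ∈ Finset.range n, ((2*n+1+i:ℕ):ℚ))
    = ((n.factorial:ℕ):ℚ)^2 * ((3*n).choose n:ℚ)^2 := by
  have h1 := PF (2*n) n
  rw [show 2*n+n = 3*n from by ring] at h1
  have h3 := congrArg (Nat.cast (R:=ℚ))
    (Nat.choose_mul_factorial_mul_factorial (show n ≤ 3*n by omega))
  rw [show 3*n-n = 2*n from by omega] at h3
  have hne : ((2*n).factorial:ℚ) ≠ 0 := by positivity
  apply mul_right_cancel₀ hne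
  push_cast at h1 h3 ⊢
  linear_combination (((3*n).choose n:ℚ)*(n.factorial:ℚ)) * h1
    - (((3*n).choose n:ℚ)*(n.factorial:ℚ)) * h3

lemma base (n : ℕ) :
    ∑ k ∈ Finset.range (n+1),
      (n.choose k:ℚ) * ((2*n).choose k:ℚ) * ((3*n+k).choose k:ℚ) = ((3*n).choose n:ℚ)^2 := by
  have E := congrArg (Polynomial.eval 0) (star n)
  simp only [Polynomial.eval_finset_sum, Polynomial.eval_mul, Polynomial.eval_C, ev0] at E
  have hne : ((n.factorial:ℕ):ℚ)^2 ≠ 0 := by positivity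
  apply mul_left_cancel₀ hne
  rw [Finset.mul_sum]
  calc ∑ k ∈ Finset.range (n+1),
        ((n.factorial:ℕ):ℚ)^2 * ((n.choose k:ℚ) * ((2*n).choose k:ℚ) * ((3*n+k).choose k:ℚ))
      = ∑ k ∈ Finset.range (n+1),
        (((n.choose k * (2*n).choose k * n.factorial : ℕ)):ℚ)
          * (∏ i ∈ Finset.range k, ((3*n+1+i:ℕ):ℚ))
          * (∏ i ∈ Finset.range (n-k), ((k+1+i:ℕ):ℚ)) := by
        apply Finset.sum_congr rfl
        intro k hk
        rw [Finset.mem_range, Nat.lt_succ_iff] at hk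
        rw [tw n k hk]
    _ = ((((3*n).choose n * n.factorial : ℕ)):ℚ) * ∏ i ∈ Finset.range n, ((2*n+1+i:ℕ):ℚ) := E
    _ = ((n.factorial:ℕ):ℚ)^2 * ((3*n).choose n:ℚ)^2 := twR n

lemma harm_add (u : ℕ) : ∀ d : ℕ,
    harmonicQ (u+d) = harmonicQ u + ∑ i ∈ Finset.range d, ((u+1+i:ℕ):ℚ)⁻¹ := by
  intro d
  induction d with
  | zero => simp
  | succ d ih =>
    rw [show u+(d+1) = (u+d)+1 from rfl, harmonicQ, Finset.sum_range_succ, ← harmonicQ, ih,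
      Finset.sum_range_succ]
    have h : (1:ℚ)/(((u+d:ℕ):ℚ)+1) = ((u+1+d:ℕ):ℚ)⁻¹ := by
      rw [one_div]
      congr 1
      push_cast
      ring
    rw [h]
    ring

open Polynomial in
lemma devterm (q : ℚ) (A B : Polynomial ℚ) :
    Polynomial.eval 0 (Polynomial.derivative (Polynomial.C q * A * B))
      = q * ((Polynomial.derivative A).eval 0 * B.eval 0
          + A.eval 0 * (Polynomial.derivative B).eval 0) := by
  rw [derivative_mul, derivative_mul, derivative_C]
  simp only [Polynomial.eval_add, Polynomial.eval_mul, Polynomial.eval_C, zero_mul, zero_add]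
  ring

open Polynomial in
lemma weighted (n : ℕ) :
    ∑ k ∈ Finset.range (n+1), (n.choose k:ℚ) * ((2*n).choose k:ℚ) * ((3*n+k).choose k:ℚ)
        * ((harmonicQ (3*n+k) - harmonicQ (3*n)) + (harmonicQ n - harmonicQ k))
      = ((3*n).choose n:ℚ)^2 * (harmonicQ (3*n) - harmonicQ (2*n)) := by
  have W := congrArg (fun p => Polynomial.eval 0 (Polynomial.derivative p)) (star n)
  simp only [Polynomial.derivative_sum, Polynomial.eval_finset_sum] at W
  have hL : ∀ k ∈ Finset.range (n+1),
      Polynomial.eval 0 (Polynomial.derivative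
        (Polynomial.C (((n.choose k * (2*n).choose k * n.factorial : ℕ)):ℚ)
          * (∏ i ∈ Finset.range k, (X + Polynomial.C (((3*n+1+i : ℕ)):ℚ)))
          * (∏ i ∈ Finset.range (n-k), (X + Polynomial.C (((k+1+i : ℕ)):ℚ)))))
      = ((n.factorial:ℕ):ℚ)^2 * ((n.choose k:ℚ) * ((2*n).choose k:ℚ) * ((3*n+k).choose k:ℚ)
          * ((harmonicQ (3*n+k) - harmonicQ (3*n)) + (harmonicQ n - harmonicQ k))) := by
    intro k hk
    rw [Finset.mem_range, Nat.lt_succ_iff] at hk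
    rw [devterm, dev0 _ _ (fun i _ => Nat.cast_ne_zero.mpr (by omega)),
      dev0 _ _ (fun i _ => Nat.cast_ne_zero.mpr (by omega)), ev0, ev0]
    have e3 : ∑ i ∈ Finset.range k, ((3*n+1+i:ℕ):ℚ)⁻¹
        = harmonicQ (3*n+k) - harmonicQ (3*n) := by
      have h := harm_add (3*n) k
      linarith
    have eB : ∑ i ∈ Finset.range (n-k), ((k+1+i:ℕ):ℚ)⁻¹ = harmonicQ n - harmonicQ k := by
      have h := harm_add k (n-k)
      rw [show k+(n-k) = n from by omega] at h
      linarith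
    rw [e3, eB]
    have t := tw n k hk
    linear_combination ((harmonicQ (3*n+k) - harmonicQ (3*n)) + (harmonicQ n - harmonicQ k)) * t
  have hR : Polynomial.eval 0 (Polynomial.derivative
        (Polynomial.C ((((3*n).choose n * n.factorial : ℕ)):ℚ)
          * ∏ i ∈ Finset.range n, (X + Polynomial.C (((2*n+1+i : ℕ)):ℚ))))
      = ((n.factorial:ℕ):ℚ)^2 * (((3*n).choose n:ℚ)^2 * (harmonicQ (3*n) - harmonicQ (2*n))) := by
    rw [Polynomial.derivative_mul, Polynomial.derivative_C]
    simp only [zero_mul, zero_add, Polynomial.eval_add, Polynomial.eval_mul, Polynomial.eval_C]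
    rw [dev0 _ _ (fun i _ => Nat.cast_ne_zero.mpr (by omega))]
    have e2 : ∑ i ∈ Finset.range n, ((2*n+1+i:ℕ):ℚ)⁻¹
        = harmonicQ (3*n) - harmonicQ (2*n) := by
      have h := harm_add (2*n) n
      rw [show 2*n+n = 3*n from by ring] at h
      linarith
    rw [e2]
    have t := twR n
    linear_combination (harmonicQ (3*n) - harmonicQ (2*n)) * t
  rw [Finset.sum_congr rfl hL, hR] at W
  have hne : ((n.factorial:ℕ):ℚ)^2 ≠ 0 := by positivity
  apply mul_left_cancel₀ hne
  rw [Finset.mul_sum]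
  exact W

end SaalschutzAux

theorem stmt7 (n : ℕ) :
    ∑ k ∈ range (n + 1), (n.choose k : ℚ) * ((2 * n).choose k : ℚ) * ((3 * n + k).choose k : ℚ) *
        (harmonicQ (3 * n + k) - harmonicQ k)
      = ((3 * n).choose n : ℚ) ^ 2 * (2 * harmonicQ (3 * n) - harmonicQ n - harmonicQ (2 * n)) := by
  have hb := base n
  have hw := weighted n
  calc ∑ k ∈ range (n + 1), (n.choose k : ℚ) * ((2 * n).choose k : ℚ) * ((3 * n + k).choose k : ℚ) *
        (harmonicQ (3 * n + k) - harmonicQ k)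
      = ∑ k ∈ range (n+1), ((n.choose k:ℚ) * ((2*n).choose k:ℚ) * ((3*n+k).choose k:ℚ)
          * ((harmonicQ (3*n+k) - harmonicQ (3*n)) + (harmonicQ n - harmonicQ k))
        + (n.choose k:ℚ) * ((2*n).choose k:ℚ) * ((3*n+k).choose k:ℚ)
          * (harmonicQ (3*n) - harmonicQ n)) := by
        apply Finset.sum_congr rfl
        intro k _
        ring
    _ = ((3*n).choose n:ℚ)^2 * (harmonicQ (3*n) - harmonicQ (2*n))
        + (∑ k ∈ range (n+1), (n.choose k:ℚ) * ((2*n).choose k:ℚ) * ((3*n+k).choose k:ℚ))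
          * (harmonicQ (3*n) - harmonicQ n) := by
        rw [Finset.sum_add_distrib, hw, ← Finset.sum_mul]
    _ = ((3 * n).choose n : ℚ) ^ 2 * (2 * harmonicQ (3 * n) - harmonicQ n - harmonicQ (2 * n)) := by
        rw [hb]
        ring
end

section
/- For all natural numbers n, the sum over k from 0 to n of C(n,k) * (1 + (n - 2k) * H_k) equals 1, where n - 2k is interpreted as an integer (possibly negative). -/
open Finset

lemma hQ_zero : harmonicQ 0 = 0 := by simp [harmonicQ]

lemma hQ_succ (k : ℕ) : harmonicQ (k + 1) = harmonicQ k + 1 / (k + 1) := by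
  simp [harmonicQ, Finset.sum_range_succ]

lemma sum_choose_cast (n : ℕ) : ∑ k ∈ range (n + 1), (n.choose k : ℚ) = 2 ^ n := by
  have h := congrArg (Nat.cast : ℕ → ℚ) (Nat.sum_range_choose n)
  push_cast at h
  simpa using h

lemma lemB (n : ℕ) :
    ∑ k ∈ range (n + 1), (n.choose k : ℚ) * ((n : ℚ) - 1 - 2 * k) / (k + 1) = -1 := by
  have hterm : ∀ k ∈ range (n + 1),
      (n.choose k : ℚ) * ((n : ℚ) - 1 - 2 * k) / (k + 1)
        = ((n + 1).choose (k + 1) : ℚ) - 2 * (n.choose k : ℚ) := by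
    intro k _
    have hk : ((k : ℚ) + 1) ≠ 0 := by positivity
    have hc : ((n + 1).choose (k + 1) : ℚ) * ((k : ℚ) + 1) = ((n : ℚ) + 1) * (n.choose k : ℚ) := by
      exact_mod_cast (congrArg (Nat.cast : ℕ → ℚ) (Nat.add_one_mul_choose_eq n k)).symm
    field_simp
    nlinarith [hc]
  rw [Finset.sum_congr rfl hterm, Finset.sum_sub_distrib]
  have h1 : ∑ k ∈ range (n + 1), ((n + 1).choose (k + 1) : ℚ) = 2 ^ (n + 1) - 1 := by
    have h2 : ∑ k ∈ range (n + 2), ((n + 1).choose k : ℚ) = 2 ^ (n + 1) := sum_choose_cast (n + 1)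
    rw [Finset.sum_range_succ'] at h2
    simp only [Nat.choose_zero_right, Nat.cast_one] at h2
    linarith
  have h3 : ∑ k ∈ range (n + 1), 2 * (n.choose k : ℚ) = 2 * 2 ^ n := by
    rw [← Finset.mul_sum, sum_choose_cast]
  rw [h1, h3]; ring

lemma lemA (n : ℕ) :
    ∑ k ∈ range (n + 1), (n.choose k : ℚ) * ((n : ℚ) - 2 * k) * harmonicQ k = 1 - 2 ^ n := by
  induction n with
  | zero => simp [hQ_zero]
  | succ n ih =>
    have hstep : ∑ k ∈ range (n + 2),
        ((n + 1).choose k : ℚ) * (((n : ℚ) + 1) - 2 * k) * harmonicQ k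
        = ∑ k ∈ range (n + 1),
          ((n.choose k : ℚ) * ((n : ℚ) - 1 - 2 * k) * harmonicQ k
            + (n.choose k : ℚ) * ((n : ℚ) - 1 - 2 * k) / (k + 1)
            + (n.choose (k + 1) : ℚ) * (((n : ℚ) + 1) - 2 * ((k : ℚ) + 1)) * harmonicQ (k + 1)) := by
      rw [Finset.sum_range_succ']
      simp only [hQ_zero, mul_zero, add_zero, Nat.cast_zero]
      refine Finset.sum_congr rfl ?_
      intro k _
      have hcc : (((n + 1).choose (k + 1) : ℕ) : ℚ) = (n.choose k : ℚ) + (n.choose (k + 1) : ℚ) := by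
        rw [Nat.choose_succ_succ]; push_cast; ring
      rw [hcc, hQ_succ]
      have hk : ((k : ℚ) + 1) ≠ 0 := by positivity
      push_cast
      field_simp
      ring
    have hgshift : ∑ k ∈ range (n + 1),
          (n.choose (k + 1) : ℚ) * (((n : ℚ) + 1) - 2 * ((k : ℚ) + 1)) * harmonicQ (k + 1)
        = ∑ k ∈ range (n + 1), (n.choose k : ℚ) * (((n : ℚ) + 1) - 2 * k) * harmonicQ k := by
      have h1 := Finset.sum_range_succ'
        (fun j => (n.choose j : ℚ) * (((n : ℚ) + 1) - 2 * (j : ℚ)) * harmonicQ j) (n + 1)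
      have h2 := Finset.sum_range_succ
        (fun j => (n.choose j : ℚ) * (((n : ℚ) + 1) - 2 * (j : ℚ)) * harmonicQ j) (n + 1)
      simp only [hQ_zero, mul_zero, Nat.cast_zero, Nat.choose_succ_self, zero_mul,
        add_zero] at h1 h2
      push_cast at h1 h2 ⊢
      linarith
    have hgoal : ∑ k ∈ range (n + 1 + 1),
        ((n + 1).choose k : ℚ) * (((n : ℚ) + 1) - 2 * k) * harmonicQ k = 1 - 2 ^ (n + 1) := by
      rw [hstep, Finset.sum_add_distrib, Finset.sum_add_distrib, hgshift, lemB]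
      have hcomb : ∑ k ∈ range (n + 1),
          (n.choose k : ℚ) * ((n : ℚ) - 1 - 2 * k) * harmonicQ k
          + ∑ k ∈ range (n + 1), (n.choose k : ℚ) * (((n : ℚ) + 1) - 2 * k) * harmonicQ k
          = 2 * ∑ k ∈ range (n + 1), (n.choose k : ℚ) * ((n : ℚ) - 2 * k) * harmonicQ k := by
        rw [Finset.mul_sum, ← Finset.sum_add_distrib]
        refine Finset.sum_congr rfl ?_
        intro k _
        ring
      rw [ih] at hcomb
      have hp : (2:ℚ) ^ (n+1) = 2 * 2 ^ n := by ring
      linarith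
    push_cast
    push_cast at hgoal
    exact hgoal
  
theorem stmt10 (n : ℕ) :
    ∑ k ∈ range (n + 1), (n.choose k : ℚ) * (1 + ((n : ℚ) - 2 * k) * harmonicQ k) = 1 := by
  have hsplit : ∀ k ∈ range (n + 1),
      (n.choose k : ℚ) * (1 + ((n : ℚ) - 2 * k) * harmonicQ k)
        = (n.choose k : ℚ) + (n.choose k : ℚ) * ((n : ℚ) - 2 * k) * harmonicQ k := by
    intro k _; ring
  rw [Finset.sum_congr rfl hsplit, Finset.sum_add_distrib, sum_choose_cast, lemA]
  ring
end

section
/- For all natural numbers n, the sum over k from 0 to n of (1 - 2*(n - 2k)*H_k) / C(n,k)^2 equals 2*(n+1)^2/(n+2) * H_{n+1}. -/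
open Finset

lemma chq_ne {n k : ℕ} (h : k ≤ n) : ((n.choose k : ℕ) : ℚ) ≠ 0 := by
  exact_mod_cast (Nat.choose_pos h).ne'

lemma chq_rel {n k : ℕ} (h : k < n) :
    ((n.choose (k+1) : ℕ) : ℚ) = (n.choose k : ℚ) * ((n : ℚ) - k) / ((k : ℚ) + 1) := by
  have := Nat.choose_succ_right_eq n k
  have h2 : ((n.choose (k+1) : ℕ) : ℚ) * ((k:ℚ)+1) = (n.choose k : ℚ) * ((n:ℚ) - k) := by
    have := congrArg (Nat.cast : ℕ → ℚ) this
    push_cast [Nat.cast_sub h.le] at this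
    linarith [this]
  field_simp at h2 ⊢
  linarith [h2]

lemma tele (n : ℕ) : ∀ m, m ≤ n →
    ∑ k ∈ range m, ((n:ℚ) - 2*k)/(n.choose k : ℚ)^2
      = (((n:ℚ)+1)^2 - ((n:ℚ)+1-m)^2/(n.choose m : ℚ)^2)/((n:ℚ)+2) := by
  intro m
  induction m with
  | zero => intro _; simp
  | succ m ih =>
    intro hm
    have hmn : m < n := hm
    have h1 : ((n.choose m : ℕ) : ℚ) ≠ 0 := chq_ne hmn.le
    have hn2 : ((n:ℚ)+2) ≠ 0 := by positivity
    have hk1 : ((m:ℚ)+1) ≠ 0 := by positivity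
    have hnm : ((n:ℚ) - m) ≠ 0 := by
      have : (m:ℚ) < n := by exact_mod_cast hmn
      linarith
    rw [Finset.sum_range_succ, ih hmn.le, chq_rel hmn]
    push_cast
    field_simp
    ring

lemma fullzero (n : ℕ) : ∑ k ∈ range (n+1), ((n:ℚ) - 2*k)/(n.choose k : ℚ)^2 = 0 := by
  rw [Finset.sum_range_succ, tele n n le_rfl]
  have hn2 : ((n:ℚ)+2) ≠ 0 := by positivity
  simp [Nat.choose_self]
  field_simp
  ring

lemma sumB (n : ℕ) : ∑ k ∈ range (n+1), ((k:ℚ)+1)/(n.choose k : ℚ)^2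
    = ((n:ℚ)+2)/2 * ∑ k ∈ range (n+1), 1/(n.choose k : ℚ)^2 := by
  have hrefl := Finset.sum_range_reflect
    (fun k => ((k:ℚ)+1)/(n.choose k : ℚ)^2) (n+1)
  have h1 : ∑ k ∈ range (n+1), ((k:ℚ)+1)/(n.choose k : ℚ)^2
      = ∑ k ∈ range (n+1), (((n:ℚ)-k)+1)/(n.choose k : ℚ)^2 := by
    rw [← hrefl]
    refine Finset.sum_congr rfl fun k hk => ?_
    have hk' : k ≤ n := by simpa [Nat.lt_succ_iff] using Finset.mem_range.mp hk
    have : n + 1 - 1 - k = n - k := by omega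
    rw [this, Nat.choose_symm hk', Nat.cast_sub hk']
  have h2 : (∑ k ∈ range (n+1), ((k:ℚ)+1)/(n.choose k : ℚ)^2)
      + ∑ k ∈ range (n+1), ((k:ℚ)+1)/(n.choose k : ℚ)^2
      = ((n:ℚ)+2) * ∑ k ∈ range (n+1), 1/(n.choose k : ℚ)^2 := by
    nth_rewrite 2 [h1]
    rw [← Finset.sum_add_distrib, Finset.mul_sum]
    refine Finset.sum_congr rfl fun k hk => ?_
    rw [← add_div, mul_one_div]
    ring_nf
  linarith [h2]

lemma hsum (n : ℕ) :
    ∑ k ∈ range (n+1), ((n:ℚ)-2*k) * harmonicQ k / (n.choose k : ℚ)^2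
      = (∑ j ∈ range n, ((j:ℚ)+1)/(n.choose j : ℚ)^2)/((n:ℚ)+2)
        - ((n:ℚ)+1)^2/((n:ℚ)+2) * harmonicQ n := by
  have hn2 : ((n:ℚ)+2) ≠ 0 := by positivity
  have step1 : ∑ k ∈ range (n+1), ((n:ℚ)-2*k) * harmonicQ k / (n.choose k : ℚ)^2
      = ∑ k ∈ range (n+1), ∑ j ∈ range k,
          ((n:ℚ)-2*k)/(((j:ℚ)+1)*(n.choose k : ℚ)^2) := by
    refine Finset.sum_congr rfl fun k _ => ?_
    rw [harmonicQ, Finset.mul_sum, Finset.sum_div]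
    refine Finset.sum_congr rfl fun j _ => ?_
    rw [mul_one_div, div_div]
  have hsw := Finset.sum_Ico_Ico_comm' 0 (n+1)
    (fun i j => ((n:ℚ)-2*j)/(((i:ℚ)+1)*(n.choose j : ℚ)^2))
  simp only [Nat.Ico_zero_eq_range] at hsw
  rw [step1, ← hsw, Finset.sum_range_succ, Finset.Ico_self, Finset.sum_empty, add_zero]
  have step2 : ∀ i ∈ range n,
      ∑ j ∈ Finset.Ico (i+1) (n+1), ((n:ℚ)-2*j)/(((i:ℚ)+1)*(n.choose j : ℚ)^2)
        = ((i:ℚ)+1)/(n.choose i : ℚ)^2/((n:ℚ)+2)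
          - ((n:ℚ)+1)^2/((n:ℚ)+2) * ((1:ℚ)/((i:ℚ)+1)) := by
    intro i hi
    have hin : i < n := Finset.mem_range.mp hi
    have hi1 : ((i:ℚ)+1) ≠ 0 := by positivity
    have hci : ((n.choose i : ℕ):ℚ) ≠ 0 := chq_ne hin.le
    have hni : ((n:ℚ) - i) ≠ 0 := by
      have : (i:ℚ) < n := by exact_mod_cast hin
      linarith
    have e1 : ∑ j ∈ Finset.Ico (i+1) (n+1), ((n:ℚ)-2*j)/(((i:ℚ)+1)*(n.choose j : ℚ)^2)
        = (1/((i:ℚ)+1)) * ∑ j ∈ Finset.Ico (i+1) (n+1), ((n:ℚ)-2*j)/(n.choose j : ℚ)^2 := by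
      rw [Finset.mul_sum]
      refine Finset.sum_congr rfl fun j _ => ?_
      rw [mul_comm ((i:ℚ)+1) ((n.choose j : ℚ)^2), one_div, inv_mul_eq_div, div_div]
    have e2 : ∑ j ∈ Finset.Ico (i+1) (n+1), ((n:ℚ)-2*j)/(n.choose j : ℚ)^2
        = - ∑ j ∈ range (i+1), ((n:ℚ)-2*j)/(n.choose j : ℚ)^2 := by
      rw [Finset.sum_Ico_eq_sub _ (by omega), fullzero]; ring
    rw [e1, e2, tele n (i+1) (by omega), chq_rel hin]
    push_cast
    field_simp
    ring
  rw [Finset.sum_congr rfl step2, Finset.sum_sub_distrib, ← Finset.sum_div, ← Finset.mul_sum,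
    harmonicQ]

theorem stmt19 (n : ℕ) :
    ∑ k ∈ range (n + 1), (1 - 2 * ((n : ℚ) - 2 * k) * harmonicQ k) / (n.choose k : ℚ) ^ 2
      = 2 * ((n : ℚ) + 1) ^ 2 / ((n : ℚ) + 2) * harmonicQ (n + 1) := by
  have hn1 : ((n:ℚ)+1) ≠ 0 := by positivity
  have hn2 : ((n:ℚ)+2) ≠ 0 := by positivity
  have split : ∑ k ∈ range (n+1), (1 - 2*((n:ℚ) - 2*k)*harmonicQ k)/(n.choose k : ℚ)^2
      = (∑ k ∈ range (n+1), 1/(n.choose k : ℚ)^2)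
        - 2 * ∑ k ∈ range (n+1), ((n:ℚ)-2*k) * harmonicQ k / (n.choose k : ℚ)^2 := by
    rw [Finset.mul_sum, ← Finset.sum_sub_distrib]
    refine Finset.sum_congr rfl fun k _ => ?_
    ring
  have hB : ∑ j ∈ range n, ((j:ℚ)+1)/(n.choose j : ℚ)^2
      = ((n:ℚ)+2)/2 * (∑ k ∈ range (n+1), 1/(n.choose k : ℚ)^2) - ((n:ℚ)+1) := by
    have h := sumB n
    rw [Finset.sum_range_succ (fun k => ((k:ℚ)+1)/(n.choose k : ℚ)^2)] at h
    simp only [Nat.choose_self, Nat.cast_one, one_pow, div_one] at h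
    linarith
  have hH : harmonicQ (n+1) = harmonicQ n + 1/((n:ℚ)+1) := by
    rw [harmonicQ, harmonicQ, Finset.sum_range_succ]
  rw [split, hsum n, hB, hH]
  field_simp
  ring
end
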